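/- Let G = (V,E) be a finite, 2-edge-connected, undirected graph with two distinguished distinct vertices s and t, and consider the single relative demand (s,t,3). Then there exists a finite set D of unordered pairs of vertices of G such that: (i) every pair {u,v} in D is an ordinary 3-demand, i.e., for every edge set F ⊆ E with |F| ≤ 2, the vertices u and v remain connected in G∖F; and (ii) for every spanning subgraph H of G that contains all forced edges, H satisfies the relative demand (s,t,3) if and only if for every pair {u,v} in D and every F ⊆ E(H) with |F| ≤ 2, u and v are connected in H∖F. -/

import Mathlib

open SimpleGraph

/-- Edges of `G` with exactly one endpoint in `A`. -/
def delta {V : Type*} (G : SimpleGraph V) (A : Set V) : Set (Sym2 V) :=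
  {e | e ∈ G.edgeSet ∧ ∃ u v, e = s(u, v) ∧ u ∈ A ∧ v ∉ A}

/-- `G` is 2-edge-connected: connected and still connected after deleting any single edge. -/
def TwoEdgeConnected {V : Type*} (G : SimpleGraph V) : Prop :=
  G.Connected ∧ ∀ e ∈ G.edgeSet, (G.deleteEdges {e}).Connected

/-- An edge is forced (for the relative demand `(s,t,3)`) if it lies in `δ_G(A)` for some
`st`-set `A` with `d_G(A) = 2`. -/
def ForcedEdge {V : Type*} (G : SimpleGraph V) (s t : V) (e : Sym2 V) : Prop :=
  ∃ A : Set V, s ∈ A ∧ t ∉ A ∧ (delta G A).ncard = 2 ∧ e ∈ delta G A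

set_option linter.unusedSectionVars false
namespace RSND

variable {V : Type*} [Fintype V]

lemma finSym (s : Set (Sym2 V)) : s.Finite := by
  haveI := Classical.decEq V
  exact Set.toFinite _

lemma delta_cross {G : SimpleGraph V} {A : Set V} {e : Sym2 V} (he : e ∈ delta G A) :
    ∃ u v, G.Adj u v ∧ e = s(u, v) ∧ u ∈ A ∧ v ∉ A := by
  obtain ⟨hE, u, v, rfl, hu, hv⟩ := he
  exact ⟨u, v, (G.mem_edgeSet).1 hE, rfl, hu, hv⟩

lemma adj_mem_delta {G : SimpleGraph V} {A : Set V} {u v : V} (h : G.Adj u v) :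
    s(u, v) ∈ delta G A ↔ ((u ∈ A ∧ v ∉ A) ∨ (v ∈ A ∧ u ∉ A)) := by
  constructor
  · rintro ⟨-, x, y, hxy, hx, hy⟩
    rw [Sym2.eq_iff] at hxy
    rcases hxy with ⟨h1, h2⟩ | ⟨h1, h2⟩
    · subst h1; subst h2; exact Or.inl ⟨hx, hy⟩
    · subst h1; subst h2; exact Or.inr ⟨hx, hy⟩
  · rintro (⟨h1, h2⟩ | ⟨h1, h2⟩)
    · exact ⟨(G.mem_edgeSet).2 h, u, v, rfl, h1, h2⟩
    · exact ⟨(G.mem_edgeSet).2 h, v, u, Sym2.eq_swap.symm, h1, h2⟩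

lemma delta_subset_edgeSet (G : SimpleGraph V) (A : Set V) : delta G A ⊆ G.edgeSet :=
  fun _ he => he.1

lemma delta_compl (G : SimpleGraph V) (A : Set V) : delta G Aᶜ = delta G A := by
  ext e
  constructor
  · rintro ⟨hE, u, v, rfl, hu, hv⟩
    exact ⟨hE, v, u, Sym2.eq_swap.symm, by simpa using hv, by simpa using hu⟩
  · rintro ⟨hE, u, v, rfl, hu, hv⟩
    exact ⟨hE, v, u, Sym2.eq_swap.symm, by simpa using hv, by simpa using hu⟩

/-- If `a ∈ X` is reachable to `b ∉ X`, some edge of the walk crosses `X`,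
with the two sides reachable from the respective endpoints. -/
lemma reach_cross {K : SimpleGraph V} {X : Set V} {a b : V} (h : K.Reachable a b)
    (ha : a ∈ X) (hb : b ∉ X) :
    ∃ u v, K.Adj u v ∧ u ∈ X ∧ v ∉ X ∧ K.Reachable a u ∧ K.Reachable v b := by
  obtain ⟨w⟩ := h

  revert ha hb
  induction w with
  | nil => intro ha hb; exact absurd ha hb
  | @cons x y z hxy p ih =>
    intro ha hb
    by_cases hy : y ∈ X
    · obtain ⟨u, v, h1, h2, h3, h4, h5⟩ := ih hy hb
      exact ⟨u, v, h1, h2, h3, (hxy.reachable).trans h4, h5⟩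
    · exact ⟨x, y, hxy, ha, hy, SimpleGraph.Reachable.rfl, p.reachable⟩

lemma not_reach_of_closed {K : SimpleGraph V} {X : Set V} {a b : V} (ha : a ∈ X) (hb : b ∉ X)
    (hcl : ∀ u v, K.Adj u v → u ∈ X → v ∉ X → False) : ¬ K.Reachable a b := by
  intro h
  obtain ⟨u, v, h1, h2, h3, -, -⟩ := reach_cross h ha hb
  exact hcl u v h1 h2 h3

/-- An `st`-cut side of size two. -/
def Cut (G : SimpleGraph V) (s t : V) (A : Set V) : Prop :=
  s ∈ A ∧ t ∉ A ∧ (delta G A).ncard = 2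

lemma cut_compl {G : SimpleGraph V} {s t : V} {A : Set V} (h : Cut G s t A) :
    Cut G t s Aᶜ := by
  refine ⟨h.2.1, by simpa using h.1, ?_⟩
  rw [delta_compl]; exact h.2.2

/-- Any nonempty proper set has at least two crossing edges, in a 2-edge-connected graph. -/
lemma two_le_delta {G : SimpleGraph V} (h2 : TwoEdgeConnected G) {X : Set V}
    (hne : X.Nonempty) (hne' : Xᶜ.Nonempty) : 2 ≤ (delta G X).ncard := by
  obtain ⟨a, ha⟩ := hne
  obtain ⟨b, hb⟩ := hne'
  obtain ⟨u₁, v₁, h1, h2', h3, -, -⟩ := reach_cross (h2.1.preconnected a b) ha hb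
  have he1 : s(u₁, v₁) ∈ G.edgeSet := (G.mem_edgeSet).2 h1
  obtain ⟨u₂, v₂, h1', h2'', h3', -, -⟩ :=
    reach_cross ((h2.2 _ he1).preconnected a b) ha hb
  rw [SimpleGraph.deleteEdges_adj] at h1'
  have hne12 : s(u₂, v₂) ≠ s(u₁, v₁) := by simpa using h1'.2
  have hsub : {s(u₂, v₂), s(u₁, v₁)} ⊆ delta G X := by
    intro e he
    rcases he with rfl | he
    · exact (adj_mem_delta h1'.1).2 (Or.inl ⟨h2'', h3'⟩)
    · simp only [Set.mem_singleton_iff] at he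
      subst he
      exact (adj_mem_delta h1).2 (Or.inl ⟨h2', h3⟩)
  calc 2 = ({s(u₂, v₂), s(u₁, v₁)} : Set (Sym2 V)).ncard := (Set.ncard_pair hne12).symm
    _ ≤ (delta G X).ncard := Set.ncard_le_ncard hsub (finSym _)

/-- If no 2-cut separating `s` from `t` is contained in `F` (with `|F| ≤ 2`),
then `s,t` remain connected after deleting `F`. -/
lemma noncut_reachable {G : SimpleGraph V} (h2 : TwoEdgeConnected G) {s t : V}
    {F : Set (Sym2 V)} (hcard : F.ncard ≤ 2)
    (hnc : ∀ A : Set V, Cut G s t A → ¬ delta G A ⊆ F) :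
    (G.deleteEdges F).Reachable s t := by
  by_contra h
  set X := {x | (G.deleteEdges F).Reachable s x} with hXdef
  have hsX : s ∈ X := SimpleGraph.Reachable.rfl
  have htX : t ∉ X := h
  have hXF : delta G X ⊆ F := by
    intro e he
    obtain ⟨u, v, hadj, rfl, hu, hv⟩ := delta_cross he
    by_contra heF
    exact hv (hu.trans (SimpleGraph.Adj.reachable
      ((SimpleGraph.deleteEdges_adj).2 ⟨hadj, heF⟩)))
  have h2le : 2 ≤ (delta G X).ncard := two_le_delta h2 ⟨s, hsX⟩ ⟨t, htX⟩
  have hle : (delta G X).ncard ≤ 2 :=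
    le_trans (Set.ncard_le_ncard hXF (finSym _)) hcard
  exact hnc X ⟨hsX, htX, le_antisymm hle h2le⟩ hXF

/-- If `delta G A ⊆ F` and `A` separates `a` from `b`, deleting `F` disconnects them. -/
lemma cut_not_reachable {G : SimpleGraph V} {F : Set (Sym2 V)} {A : Set V} {a b : V}
    (ha : a ∈ A) (hb : b ∉ A) (hAF : delta G A ⊆ F) :
    ¬ (G.deleteEdges F).Reachable a b := by
  refine not_reach_of_closed ha hb ?_
  intro u v huv hu hv
  rw [SimpleGraph.deleteEdges_adj] at huv
  exact huv.2 (hAF ((adj_mem_delta huv.1).2 (Or.inl ⟨hu, hv⟩)))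

/-- Ordinary 3-demand connectivity. -/
def R3 (G : SimpleGraph V) (u v : V) : Prop :=
  ∀ F : Set (Sym2 V), F ⊆ G.edgeSet → F.ncard ≤ 2 → (G.deleteEdges F).Reachable u v

lemma r3_of_no_sep {G : SimpleGraph V} (h2 : TwoEdgeConnected G) {u v : V}
    (h : ∀ W : Set V, u ∈ W → v ∉ W → (delta G W).ncard = 2 → False) : R3 G u v := by
  intro F _ hcard
  by_contra hcon
  set X := {x | (G.deleteEdges F).Reachable u x} with hXdef
  have huX : u ∈ X := SimpleGraph.Reachable.rfl
  have hvX : v ∉ X := hcon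
  have hXF : delta G X ⊆ F := by
    intro e he
    obtain ⟨a, b, hadj, rfl, haX, hbX⟩ := delta_cross he
    by_contra heF
    exact hbX (haX.trans (SimpleGraph.Adj.reachable
      ((SimpleGraph.deleteEdges_adj).2 ⟨hadj, heF⟩)))
  have h2le : 2 ≤ (delta G X).ncard := two_le_delta h2 ⟨u, huX⟩ ⟨v, hvX⟩
  have hle : (delta G X).ncard ≤ 2 :=
    le_trans (Set.ncard_le_ncard hXF (finSym _)) hcard
  exact h X huX hvX (le_antisymm hle h2le)

lemma no_sep_of_r3 {G : SimpleGraph V} {u v : V} (h : R3 G u v) {W : Set V}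
    (hu : u ∈ W) (hv : v ∉ W) (hW : (delta G W).ncard = 2) : False := by
  have hr := h (delta G W) (delta_subset_edgeSet G W) (le_of_eq hW)
  exact cut_not_reachable hu hv (fun e he => he) hr

lemma r3_symm {G : SimpleGraph V} {u v : V} (h : R3 G u v) : R3 G v u :=
  fun F hF hc => (h F hF hc).symm

end RSND
namespace RSND

variable {V : Type*} [Fintype V]

lemma setSet_finite (𝔉 : Set (Set V)) : 𝔉.Finite := by
  haveI : Finite (Set V) := by
    haveI := Classical.decEq V
    infer_instance
  exact Set.toFinite _

lemma delta_inter_sub (G : SimpleGraph V) (A B : Set V) :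
    delta G (A ∩ B) ⊆ delta G A ∪ delta G B := by
  intro e he
  obtain ⟨u, v, h, rfl, hu, hv⟩ := delta_cross he
  rw [Set.mem_union, adj_mem_delta h, adj_mem_delta h]
  by_cases hvA : v ∈ A
  · exact Or.inr (Or.inl ⟨hu.2, fun hvB => hv ⟨hvA, hvB⟩⟩)
  · exact Or.inl (Or.inl ⟨hu.1, hvA⟩)

lemma delta_union_sub (G : SimpleGraph V) (A B : Set V) :
    delta G (A ∪ B) ⊆ delta G A ∪ delta G B := by
  intro e he
  obtain ⟨u, v, h, rfl, hu, hv⟩ := delta_cross he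
  rw [Set.mem_union, adj_mem_delta h, adj_mem_delta h]
  rcases hu with huA | huB
  · exact Or.inl (Or.inl ⟨huA, fun hvA => hv (Or.inl hvA)⟩)
  · exact Or.inr (Or.inl ⟨huB, fun hvB => hv (Or.inr hvB)⟩)

lemma delta_inter_union_sub (G : SimpleGraph V) (A B : Set V) :
    delta G (A ∩ B) ∩ delta G (A ∪ B) ⊆ delta G A ∩ delta G B := by
  rintro e ⟨he1, he2⟩
  obtain ⟨u, v, h, rfl, hu, hv⟩ := delta_cross he1
  rw [adj_mem_delta h] at he2
  rcases he2 with ⟨-, hv2⟩ | ⟨-, hu2⟩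
  · exact ⟨(adj_mem_delta h).2 (Or.inl ⟨hu.1, fun hvA => hv2 (Or.inl hvA)⟩),
      (adj_mem_delta h).2 (Or.inl ⟨hu.2, fun hvB => hv2 (Or.inr hvB)⟩)⟩
  · exact absurd (Or.inl hu.1) hu2

lemma submod (G : SimpleGraph V) (A B : Set V) :
    (delta G (A ∩ B)).ncard + (delta G (A ∪ B)).ncard ≤
      (delta G A).ncard + (delta G B).ncard := by
  have h1 := Set.ncard_union_add_ncard_inter (delta G (A ∩ B)) (delta G (A ∪ B))
    (finSym _) (finSym _)
  have h2 := Set.ncard_union_add_ncard_inter (delta G A) (delta G B) (finSym _) (finSym _)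
  have h3 : (delta G (A ∩ B) ∪ delta G (A ∪ B)).ncard ≤ (delta G A ∪ delta G B).ncard :=
    Set.ncard_le_ncard (Set.union_subset (delta_inter_sub G A B) (delta_union_sub G A B))
      (finSym _)
  have h4 : (delta G (A ∩ B) ∩ delta G (A ∪ B)).ncard ≤ (delta G A ∩ delta G B).ncard :=
    Set.ncard_le_ncard (delta_inter_union_sub G A B) (finSym _)
  omega

lemma cut_inter_union {G : SimpleGraph V} {s t : V} (h2 : TwoEdgeConnected G) {A B : Set V}
    (hA : Cut G s t A) (hB : Cut G s t B) :
    Cut G s t (A ∩ B) ∧ Cut G s t (A ∪ B) := by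
  have hi : 2 ≤ (delta G (A ∩ B)).ncard :=
    two_le_delta h2 ⟨s, hA.1, hB.1⟩ ⟨t, fun h => hA.2.1 h.1⟩
  have hu : 2 ≤ (delta G (A ∪ B)).ncard :=
    two_le_delta h2 ⟨s, Or.inl hA.1⟩ ⟨t, fun h => h.elim hA.2.1 hB.2.1⟩
  have hs := submod G A B
  rw [hA.2.2, hB.2.2] at hs
  exact ⟨⟨⟨hA.1, hB.1⟩, fun h => hA.2.1 h.1, by omega⟩,
    ⟨Or.inl hA.1, fun h => h.elim hA.2.1 hB.2.1, by omega⟩⟩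

lemma cut_sInter {G : SimpleGraph V} {s t : V} (h2 : TwoEdgeConnected G) {𝔉 : Set (Set V)}
    (hne : 𝔉.Nonempty) (hall : ∀ A ∈ 𝔉, Cut G s t A) : Cut G s t (⋂₀ 𝔉) := by
  have hfin : 𝔉.Finite := setSet_finite 𝔉
  revert hne hall
  refine Set.Finite.induction_on 𝔉 hfin
    (motive := fun S _ => S.Nonempty → (∀ A ∈ S, Cut G s t A) → Cut G s t (⋂₀ S)) ?_ ?_
  · rintro ⟨x, hx⟩; exact absurd hx (Set.notMem_empty x)
  · intro a S _ _ ih hne hall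
    rw [Set.sInter_insert]
    rcases S.eq_empty_or_nonempty with rfl | hSne
    · simpa using hall a (Set.mem_insert _ _)
    · exact (cut_inter_union h2 (hall a (Set.mem_insert _ _))
        (ih hSne (fun A hA => hall A (Set.mem_insert_of_mem _ hA)))).1

lemma cut_sUnion {G : SimpleGraph V} {s t : V} (h2 : TwoEdgeConnected G) {𝔉 : Set (Set V)}
    (hne : 𝔉.Nonempty) (hall : ∀ A ∈ 𝔉, Cut G s t A) : Cut G s t (⋃₀ 𝔉) := by
  have hfin : 𝔉.Finite := setSet_finite 𝔉
  revert hne hall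
  refine Set.Finite.induction_on 𝔉 hfin
    (motive := fun S _ => S.Nonempty → (∀ A ∈ S, Cut G s t A) → Cut G s t (⋃₀ S)) ?_ ?_
  · rintro ⟨x, hx⟩; exact absurd hx (Set.notMem_empty x)
  · intro a S _ _ ih hne hall
    rw [Set.sUnion_insert]
    rcases S.eq_empty_or_nonempty with rfl | hSne
    · simpa using hall a (Set.mem_insert _ _)
    · exact (cut_inter_union h2 (hall a (Set.mem_insert _ _))
        (ih hSne (fun A hA => hall A (Set.mem_insert_of_mem _ hA)))).2

lemma reachable_invariant {K : SimpleGraph V} {P : V → Prop}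
    (hP : ∀ u v, K.Adj u v → (P u ↔ P v)) {x y : V} (h : K.Reachable x y) : P x ↔ P y := by
  obtain ⟨w⟩ := h
  induction w with
  | nil => rfl
  | @cons a b c hab p ih => exact (hP a b hab).trans ih

lemma eq_or_compl_of_delta_eq {G : SimpleGraph V} (h2 : TwoEdgeConnected G) {A B : Set V}
    (h : delta G A = delta G B) : A = B ∨ A = Bᶜ := by
  set P : V → Prop := fun x => (x ∈ A ↔ x ∈ B) with hPdef
  have hP : ∀ u v, G.Adj u v → (P u ↔ P v) := by
    intro u v huv
    have h1 : s(u, v) ∈ delta G A ↔ s(u, v) ∈ delta G B := by rw [h]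
    rw [adj_mem_delta huv, adj_mem_delta huv] at h1
    simp only [hPdef]
    tauto
  have hV : Nonempty V := h2.1.nonempty
  obtain ⟨x₀⟩ := hV
  by_cases hx₀ : P x₀
  · left
    ext y
    exact (reachable_invariant hP (h2.1.preconnected x₀ y)).1 hx₀
  · right
    ext y
    have := (reachable_invariant hP (h2.1.preconnected x₀ y))
    simp only [hPdef] at this hx₀
    simp only [Set.mem_compl_iff]
    tauto

lemma forced_symm {G : SimpleGraph V} {s t : V} {e : Sym2 V} :
    ForcedEdge G s t e ↔ ForcedEdge G t s e := by
  constructor <;> rintro ⟨A, h1, h2, h3, h4⟩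
  · exact ⟨Aᶜ, h2, by simpa using h1, by rwa [delta_compl], by rwa [delta_compl]⟩
  · exact ⟨Aᶜ, h2, by simpa using h1, by rwa [delta_compl], by rwa [delta_compl]⟩

lemma forced_mem_edgeSet {G : SimpleGraph V} {s t : V} {e : Sym2 V}
    (h : ForcedEdge G s t e) : e ∈ G.edgeSet := by
  obtain ⟨A, -, -, -, h4⟩ := h
  exact h4.1

/-- Terminal vertices: `s`, `t`, and endpoints of forced edges. -/
def Terminal (G : SimpleGraph V) (s t : V) (u : V) : Prop :=
  u = s ∨ u = t ∨ ∃ e, ForcedEdge G s t e ∧ u ∈ e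

/-- Two vertices in the same "atom": no 2-cut separating `s,t` separates them. -/
def SameAtom (G : SimpleGraph V) (s t : V) (u v : V) : Prop :=
  ∀ A : Set V, Cut G s t A → (u ∈ A ↔ v ∈ A)

lemma terminal_symm {G : SimpleGraph V} {s t u : V} (h : Terminal G s t u) :
    Terminal G t s u := by
  rcases h with h | h | ⟨e, he, hu⟩
  · exact Or.inr (Or.inl h)
  · exact Or.inl h
  · exact Or.inr (Or.inr ⟨e, forced_symm.1 he, hu⟩)

lemma sameAtom_symm_st {G : SimpleGraph V} {s t u v : V} (h : SameAtom G s t u v) :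
    SameAtom G t s u v := by
  intro A hA
  have := h Aᶜ (by simpa using cut_compl hA)
  exact not_iff_not.mp (by simpa using this)
  
lemma cut_compl' {G : SimpleGraph V} {s t : V} {A : Set V} (h : Cut G t s A) :
    Cut G s t Aᶜ := cut_compl h

end RSND
namespace RSND

variable {V : Type*} [Fintype V]

lemma sameAtom_comm {G : SimpleGraph V} {s t u v : V} (h : SameAtom G s t u v) :
    SameAtom G s t v u := fun A hA => (h A hA).symm

lemma count_sub {G : SimpleGraph V} {P Q R : Set V} {e₀ : Sym2 V}
    (hsub : delta G R ⊆ (delta G P ∪ delta G Q) \ {e₀})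
    (h₀ : e₀ ∈ delta G P ∩ delta G Q) :
    (delta G R).ncard + 2 ≤ (delta G P).ncard + (delta G Q).ncard := by
  have hUfin : (delta G P ∪ delta G Q).Finite := finSym _
  have h1 : (delta G R).ncard ≤ (delta G P ∪ delta G Q).ncard - 1 := by
    calc (delta G R).ncard ≤ ((delta G P ∪ delta G Q) \ {e₀}).ncard :=
          Set.ncard_le_ncard hsub hUfin.diff
      _ = (delta G P ∪ delta G Q).ncard - 1 :=
          Set.ncard_diff_singleton_of_mem (Or.inl h₀.1 : e₀ ∈ delta G P ∪ delta G Q)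
  have h2 : 0 < (delta G P ∪ delta G Q).ncard :=
    (Set.ncard_pos (finSym _)).2 ⟨e₀, Or.inl h₀.1⟩
  have h3 := Set.ncard_union_add_ncard_inter (delta G P) (delta G Q) (finSym _) (finSym _)
  have h4 : 0 < (delta G P ∩ delta G Q).ncard :=
    (Set.ncard_pos (finSym _)).2 ⟨e₀, h₀⟩
  omega

/-- The dangling-cut core case of the atom lemma. -/
lemma dangle_core {G : SimpleGraph V} {s t : V} (h2 : TwoEdgeConnected G) {y₁ y₂ : V}
    (hT1 : Terminal G s t y₁) (hsa : SameAtom G s t y₁ y₂)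
    {W : Set V} (hsW : s ∉ W) (htW : t ∉ W) (h1W : y₁ ∈ W) (h2W : y₂ ∉ W)
    (hWd : (delta G W).ncard = 2)
    (hex : ∃ B, Cut G s t B ∧ y₁ ∈ B) : False := by
  classical
  -- the atom's top cut A and bottom cut U
  set 𝔉A : Set (Set V) := {B | Cut G s t B ∧ y₁ ∈ B} with h𝔉A
  set A : Set V := ⋂₀ 𝔉A with hAdef
  have hAcut : Cut G s t A := cut_sInter h2 ⟨hex.choose, hex.choose_spec⟩ (fun B hB => hB.1)
  have hy₁A : y₁ ∈ A := fun B hB => hB.2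
  have hAmin : ∀ B ∈ 𝔉A, A ⊆ B := fun B hB => Set.sInter_subset_of_mem hB
  set 𝔉U : Set (Set V) := {B | Cut G s t B ∧ y₁ ∉ B} with h𝔉U
  set U : Set V := (⋃₀ 𝔉U) ∩ A with hUdef
  have hUA : U ⊆ A := Set.inter_subset_right
  have hy₁U : y₁ ∉ U := by
    rintro ⟨⟨B, hB, hyB⟩, -⟩
    exact hB.2 hyB
  have hUcut : U = ∅ ∨ Cut G s t U := by
    rcases 𝔉U.eq_empty_or_nonempty with h | h
    · left; simp [hUdef, h]
    · right
      exact (cut_inter_union h2 (cut_sUnion h2 h ((fun B hB => hB.1))) hAcut).1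
  -- atom facts
  have hy₂A : y₂ ∈ A := by
    intro B hB
    exact (hsa B hB.1).1 hB.2
  have hy₂U : y₂ ∉ U := by
    rintro ⟨⟨B, hB, hyB⟩, -⟩
    exact hB.2 ((hsa B hB.1).2 hyB)
  have hother : ∀ o : V, ¬ SameAtom G s t y₁ o → o ∈ A → o ∈ U := by
    intro o hno hoA
    rw [SameAtom] at hno
    push_neg at hno
    obtain ⟨B, hB, hBne⟩ := hno
    rcases hBne with ⟨hy, ho⟩ | ⟨hy, ho⟩
    · exact absurd (hAmin B ⟨hB, hy⟩ hoA) ho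
    · exact ⟨⟨B, ⟨hB, hy⟩, ho⟩, hoA⟩
  -- betweenness
  have hbetween : ∀ C : Set V, Cut G s t C → U ⊆ C → C ⊆ A → C = U ∨ C = A := by
    intro C hC hUC hCA
    by_cases hyC : y₁ ∈ C
    · right
      exact le_antisymm hCA (hAmin C ⟨hC, hyC⟩)
    · left
      refine le_antisymm (fun x hx => ⟨⟨C, ⟨hC, hyC⟩, hx⟩, hCA hx⟩) hUC
  -- the trapped piece Z
  set Z : Set V := W ∩ A with hZdef
  have hy₁Z : y₁ ∈ Z := ⟨h1W, hy₁A⟩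
  have hsZ : s ∉ Z := fun h => hsW h.1
  have htZ : t ∉ Z := fun h => htW h.1
  have hy₂Z : y₂ ∉ Z := fun h => h2W h.1
  have hZA : Z ⊆ A := Set.inter_subset_right
  have hZd : (delta G Z).ncard = 2 := by
    have hs := submod G W A
    rw [hWd, hAcut.2.2] at hs
    have hi : 2 ≤ (delta G (W ∩ A)).ncard :=
      two_le_delta h2 ⟨y₁, hy₁Z⟩ ⟨t, fun h => htW h.1⟩
    have hu : 2 ≤ (delta G (W ∪ A)).ncard :=
      two_le_delta h2 ⟨s, Or.inr hAcut.1⟩ ⟨t, fun h => h.elim htW hAcut.2.1⟩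
    rw [hZdef]; omega
  by_cases hUZ : (U ∩ Z).Nonempty
  · -- C := U ∪ Z is a cut strictly between U and A
    have hUc : Cut G s t U := by
      rcases hUcut with h | h
      · rw [h] at hUZ; simp at hUZ
      · exact h
    have hs := submod G U Z
    rw [hUc.2.2, hZd] at hs
    have hi : 2 ≤ (delta G (U ∩ Z)).ncard :=
      two_le_delta h2 hUZ ⟨t, fun h => htZ h.2⟩
    have hu2 : 2 ≤ (delta G (U ∪ Z)).ncard :=
      two_le_delta h2 ⟨s, Or.inl hUc.1⟩ ⟨t, fun h => h.elim (fun h' => hAcut.2.1 (hUA h')) htZ⟩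
    have hCcut : Cut G s t (U ∪ Z) :=
      ⟨Or.inl hUc.1, fun h => h.elim (fun h' => hAcut.2.1 (hUA h')) htZ, by omega⟩
    rcases hbetween _ hCcut Set.subset_union_left (Set.union_subset hUA hZA) with h | h
    · exact hy₁U (h ▸ (Or.inr hy₁Z : y₁ ∈ U ∪ Z))
    · have : y₂ ∈ U ∪ Z := h.symm ▸ hy₂A
      exact this.elim hy₂U hy₂Z
  · -- U and Z are disjoint
    rw [Set.not_nonempty_iff_eq_empty] at hUZ
    -- terminal edge at y₁
    have hy₁s : y₁ ≠ s := fun h => hsW (h ▸ h1W)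
    have hy₁t : y₁ ≠ t := fun h => htW (h ▸ h1W)
    obtain ⟨e, hef, hmem⟩ : ∃ e, ForcedEdge G s t e ∧ y₁ ∈ e := by
      rcases hT1 with h | h | h
      · exact absurd h hy₁s
      · exact absurd h hy₁t
      · exact h
    set o : V := Sym2.Mem.other hmem with hodef
    have heo : e = s(y₁, o) := (Sym2.other_spec hmem).symm
    have hadj : G.Adj y₁ o := (G.mem_edgeSet).1 (heo ▸ forced_mem_edgeSet hef)
    have hno : ¬ SameAtom G s t y₁ o := by
      obtain ⟨B, hB1, hB2, hB3, hB4⟩ := hef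
      rw [heo, adj_mem_delta hadj] at hB4
      intro hSA
      have := hSA B ⟨hB1, hB2, hB3⟩
      tauto
    have hoZ : o ∉ Z := by
      intro hoZ'
      have hoU : o ∈ U := hother o hno (hZA hoZ')
      exact (Set.eq_empty_iff_forall_notMem.1 hUZ o) ⟨hoU, hoZ'⟩
    by_cases hoU : o ∈ U
    · -- e crosses between Z and U :  U ∪ Z is a cut
      have hUc : Cut G s t U := by
        rcases hUcut with h | h
        · rw [h] at hoU; exact absurd hoU (Set.notMem_empty o)
        · exact h
      have hcount : (delta G (U ∪ Z)).ncard + 2 ≤ (delta G U).ncard + (delta G Z).ncard := by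
        refine count_sub (e₀ := e) ?_ ?_
        · intro f hf
          obtain ⟨a, b, hab, rfl, ha, hb⟩ := delta_cross hf
          constructor
          · rcases ha with haU | haZ
            · exact Or.inl ((adj_mem_delta hab).2 (Or.inl ⟨haU, fun hbU => hb (Or.inl hbU)⟩))
            · exact Or.inr ((adj_mem_delta hab).2 (Or.inl ⟨haZ, fun hbZ => hb (Or.inr hbZ)⟩))
          · -- f ≠ e since e's endpoints are both inside U ∪ Z
            intro hfe
            simp only [Set.mem_singleton_iff] at hfe
            rw [heo, Sym2.eq_iff] at hfe
            rcases hfe with ⟨h1', h2'⟩ | ⟨h1', h2'⟩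
            · exact hb (by rw [h2']; exact Or.inl hoU)
            · exact hb (by rw [h2']; exact Or.inr hy₁Z)
        · rw [heo]
          constructor
          · exact (adj_mem_delta hadj).2 (Or.inr ⟨hoU, fun h => (Set.eq_empty_iff_forall_notMem.1 hUZ y₁) ⟨h, hy₁Z⟩⟩)
          · exact (adj_mem_delta hadj).2 (Or.inl ⟨hy₁Z, fun h => (Set.eq_empty_iff_forall_notMem.1 hUZ o) ⟨hoU, h⟩⟩)
      rw [hUc.2.2, hZd] at hcount
      have hu2 : 2 ≤ (delta G (U ∪ Z)).ncard :=
        two_le_delta h2 ⟨s, Or.inl hUc.1⟩ ⟨t, fun h => h.elim (fun h' => hAcut.2.1 (hUA h')) htZ⟩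
      have hCcut : Cut G s t (U ∪ Z) :=
        ⟨Or.inl hUc.1, fun h => h.elim (fun h' => hAcut.2.1 (hUA h')) htZ, by omega⟩
      rcases hbetween _ hCcut Set.subset_union_left (Set.union_subset hUA hZA) with h | h
      · exact hy₁U (h ▸ (Or.inr hy₁Z : y₁ ∈ U ∪ Z))
      · have : y₂ ∈ U ∪ Z := h.symm ▸ hy₂A
        exact this.elim hy₂U hy₂Z
    · -- o is outside A entirely; count the boundary of A \ Z
      have hoA : o ∉ A := fun h => hoU (hother o hno h)
      have hcount : (delta G (A \ Z)).ncard + 2 ≤ (delta G A).ncard + (delta G Z).ncard := by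
        refine count_sub (e₀ := e) ?_ ?_
        · intro f hf
          obtain ⟨a, b, hab, rfl, ha, hb⟩ := delta_cross hf
          have hbZ_or : b ∈ Z ∨ b ∉ A := by
            by_cases hbA : b ∈ A
            · left; by_contra hbZ; exact hb ⟨hbA, hbZ⟩
            · right; exact hbA
          constructor
          · rcases hbZ_or with hbZ | hbA
            · exact Or.inr ((adj_mem_delta hab).2 (Or.inr ⟨hbZ, ha.2⟩))
            · exact Or.inl ((adj_mem_delta hab).2 (Or.inl ⟨ha.1, hbA⟩))
          · intro hfe
            simp only [Set.mem_singleton_iff] at hfe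
            rw [heo, Sym2.eq_iff] at hfe
            rcases hfe with ⟨h1', h2'⟩ | ⟨h1', h2'⟩
            · exact ha.2 (by rw [h1']; exact hy₁Z)
            · exact hoA (by rw [← h1']; exact ha.1)
        · rw [heo]
          constructor
          · exact (adj_mem_delta hadj).2 (Or.inl ⟨hy₁A, hoA⟩)
          · exact (adj_mem_delta hadj).2 (Or.inl ⟨hy₁Z, fun h => hoA (hZA h)⟩)
      rw [hAcut.2.2, hZd] at hcount
      have hXs : s ∈ A \ Z := ⟨hAcut.1, hsZ⟩
      have hu2 : 2 ≤ (delta G (A \ Z)).ncard :=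
        two_le_delta h2 ⟨s, hXs⟩ ⟨y₁, fun h => h.2 hy₁Z⟩
      have hXcut : Cut G s t (A \ Z) := ⟨hXs, fun h => hAcut.2.1 h.1, by omega⟩
      have hUX : U ⊆ A \ Z := fun x hx =>
        ⟨hUA hx, fun hxZ => (Set.eq_empty_iff_forall_notMem.1 hUZ x) ⟨hx, hxZ⟩⟩
      rcases hbetween _ hXcut hUX Set.diff_subset with h | h
      · exact hy₂U (h ▸ (⟨hy₂A, hy₂Z⟩ : y₂ ∈ A \ Z))
      · exact (h.symm ▸ hy₁A  : y₁ ∈ A \ Z).2 hy₁Z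

/-- Same-atom terminal pairs are separated by no 2-cut at all. -/
lemma goodPair_no_sep {G : SimpleGraph V} {s t : V} (h2 : TwoEdgeConnected G) :
    ∀ {u v : V}, Terminal G s t u → Terminal G s t v → SameAtom G s t u v →
    ∀ W : Set V, u ∈ W → v ∉ W → (delta G W).ncard = 2 → False := by
  have aux : ∀ {u v : V}, Terminal G s t u → Terminal G s t v → SameAtom G s t u v →
      ∀ W : Set V, s ∉ W → t ∉ W → u ∈ W → v ∉ W → (delta G W).ncard = 2 → False := by
    intro u v hTu hTv hsa W hsW htW huW hvW hWd
    by_cases hex : ∃ B, Cut G s t B ∧ u ∈ B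
    · exact dangle_core h2 hTu hsa hsW htW huW hvW hWd hex
    · by_cases hex2 : ∃ B, Cut G s t B ∧ u ∉ B
      · obtain ⟨B, hB, huB⟩ := hex2
        exact dangle_core (s := t) (t := s) h2 (terminal_symm hTu) (sameAtom_symm_st hsa)
          htW hsW huW hvW hWd ⟨Bᶜ, cut_compl hB, huB⟩
      · push_neg at hex hex2
        rcases hTu with h | h | ⟨e, hef, hmem⟩
        · exact hsW (h ▸ huW)
        · exact htW (h ▸ huW)
        · obtain ⟨B, hB1, hB2, hB3, -⟩ := hef
          by_cases huB : u ∈ B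
          · exact hex B ⟨hB1, hB2, hB3⟩ huB
          · exact huB (hex2 B ⟨hB1, hB2, hB3⟩)
  intro u v hTu hTv hsa W huW hvW hWd
  by_cases hsW : s ∈ W <;> by_cases htW : t ∈ W
  · -- s,t ∈ W : use the complement, with v inside
    refine aux hTv hTu (sameAtom_comm hsa) Wᶜ (by simpa using hsW) (by simpa using htW)
      (by simpa using hvW) (by simp [huW]) ?_
    rw [delta_compl]; exact hWd
  · exact hvW ((hsa W ⟨hsW, htW, hWd⟩).1 huW)
  · -- t ∈ W, s ∉ W : Wᶜ is a cut
    have hc : Cut G s t Wᶜ := ⟨by simpa using hsW, by simpa using htW, by rw [delta_compl]; exact hWd⟩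
    have := hsa Wᶜ hc
    simp only [Set.mem_compl_iff] at this
    exact (this.2 hvW) huW
  · exact aux hTu hTv hsa W hsW htW huW hvW hWd

lemma goodPair_r3 {G : SimpleGraph V} {s t : V} (h2 : TwoEdgeConnected G) {u v : V}
    (hTu : Terminal G s t u) (hTv : Terminal G s t v) (hsa : SameAtom G s t u v) :
    R3 G u v :=
  r3_of_no_sep h2 (fun W hu hv hW => goodPair_no_sep h2 hTu hTv hsa W hu hv hW)

end RSND
namespace RSND

variable {V : Type*} [Fintype V]

/-- The relative demand predicate for `H` (the LHS of (ii)). -/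
def LHS (G : SimpleGraph V) (s t : V) (H : SimpleGraph V) : Prop :=
  ∀ F : Set (Sym2 V), F ⊆ G.edgeSet → F.ncard ≤ 2 →
    (G.deleteEdges F).Reachable s t → (H.deleteEdges F).Reachable s t

lemma deleteEdges_mono_left {H H' : SimpleGraph V} (h : H ≤ H') (F : Set (Sym2 V)) :
    H.deleteEdges F ≤ H'.deleteEdges F := by
  intro a b hab
  rw [SimpleGraph.deleteEdges_adj] at hab ⊢
  exact ⟨h hab.1, hab.2⟩

lemma lhs_mono {G H H' : SimpleGraph V} {s t : V} (h : LHS G s t H) (hHH' : H ≤ H') :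
    LHS G s t H' := fun F hF hc hG =>
  ((h F hF hc hG).mono (deleteEdges_mono_left hHH' F))

lemma lhs_symm {G H : SimpleGraph V} {s t : V} (h : LHS G s t H) : LHS G t s H :=
  fun F hF hc hG => (h F hF hc hG.symm).symm

/-- The central contradiction tool: an `(X, F'')` certificate violating `LHS`. -/
lemma star {G H : SimpleGraph V} {s t : V} (h2 : TwoEdgeConnected G)
    (hL : LHS G s t H) {X : Set V} {F'' : Set (Sym2 V)}
    (hs : s ∈ X) (ht : t ∉ X) (hF : F'' ⊆ G.edgeSet) (hcard : F''.ncard ≤ 2)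
    (hnc : ∀ A : Set V, Cut G s t A → ¬ delta G A ⊆ F'')
    (hcross : ∀ u v, H.Adj u v → u ∈ X → v ∉ X → s(u, v) ∈ F'') : False := by
  have hG := noncut_reachable h2 hcard hnc
  have hH := hL F'' hF hcard hG
  refine not_reach_of_closed hs ht (fun u v huv hu hv => ?_) hH
  rw [SimpleGraph.deleteEdges_adj] at huv
  exact huv.2 (hcross u v huv.1 hu hv)

/-- Cuts with a single element of `F''` can never be contained in it. -/
lemma noncut_singleton {G : SimpleGraph V} {s t : V} {e : Sym2 V} :
    ∀ A : Set V, Cut G s t A → ¬ delta G A ⊆ ({e} : Set (Sym2 V)) := by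
  intro A hA hsub
  have := Set.ncard_le_ncard hsub (Set.finite_singleton e)
  rw [hA.2.2, Set.ncard_singleton] at this
  omega

/-- Component of a vertex. -/
def comp (K : SimpleGraph V) (x : V) : Set V := {y | K.Reachable x y}

lemma mem_comp_self (K : SimpleGraph V) (x : V) : x ∈ comp K x := SimpleGraph.Reachable.rfl

lemma comp_adj_closed {K : SimpleGraph V} {x u v : V} (hu : u ∈ comp K x)
    (h : K.Adj u v) : v ∈ comp K x := hu.trans h.reachable

lemma comp_subset_closed {K : SimpleGraph V} {X : Set V} {x : V}
    (hX : ∀ u v, K.Adj u v → u ∈ X → v ∉ X → False) (hx : x ∈ X) :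
    comp K x ⊆ X := by
  intro y hy
  by_contra hyX
  obtain ⟨u, v, h1, h2, h3, -, -⟩ := reach_cross hy hx hyX
  exact hX u v h1 h2 h3

lemma comp_eq_of_mem {K : SimpleGraph V} {x y : V} (h : y ∈ comp K x) :
    comp K y = comp K x := by
  ext z
  exact ⟨fun hz => h.trans hz, fun hz => h.symm.trans hz⟩

lemma comp_disjoint {K : SimpleGraph V} {x y : V} (h : y ∉ comp K x) {z : V}
    (hz : z ∈ comp K x) : z ∉ comp K y := fun hzy => h (hz.trans hzy.symm)

/-- Reachability after inserting one edge splits along that edge. -/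
lemma reach_insert_split {H : SimpleGraph V} {F : Set (Sym2 V)} {p q a b : V}
    (h : ((H ⊔ SimpleGraph.fromEdgeSet {s(p, q)}).deleteEdges F).Reachable a b)
    (hnr : ¬ (H.deleteEdges F).Reachable a b) :
    ((H.deleteEdges F).Reachable a p ∧ (H.deleteEdges F).Reachable q b) ∨
    ((H.deleteEdges F).Reachable a q ∧ (H.deleteEdges F).Reachable p b) := by
  obtain ⟨w⟩ := h
  revert hnr
  induction w with
  | nil => intro hnr; exact absurd SimpleGraph.Reachable.rfl hnr
  | @cons x y z hxy pw ih =>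
    intro hnr
    rw [SimpleGraph.deleteEdges_adj, SimpleGraph.sup_adj] at hxy
    obtain ⟨hadj | hins, hF⟩ := hxy
    · -- a genuine H-edge
      have hK : (H.deleteEdges F).Adj x y := (SimpleGraph.deleteEdges_adj).2 ⟨hadj, hF⟩
      by_cases hyb : (H.deleteEdges F).Reachable y z
      · exact absurd (hK.reachable.trans hyb) hnr
      · rcases ih hyb with ⟨h1, h2⟩ | ⟨h1, h2⟩
        · exact Or.inl ⟨hK.reachable.trans h1, h2⟩
        · exact Or.inr ⟨hK.reachable.trans h1, h2⟩
    · -- the inserted edge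
      rw [SimpleGraph.fromEdgeSet_adj] at hins
      have hxy' := hins.1
      simp only [Set.mem_singleton_iff] at hxy'
      rw [Sym2.eq_iff] at hxy'
      by_cases hyb : (H.deleteEdges F).Reachable y z
      · rcases hxy' with ⟨hx, hy⟩ | ⟨hx, hy⟩
        · subst hx; subst hy; exact Or.inl ⟨SimpleGraph.Reachable.rfl, hyb⟩
        · subst hx; subst hy; exact Or.inr ⟨SimpleGraph.Reachable.rfl, hyb⟩
      · rcases hxy' with ⟨hx, hy⟩ | ⟨hx, hy⟩
        · rcases ih hyb with ⟨h1, h2⟩ | ⟨h1, h2⟩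
          · exact Or.inl ⟨by rw [hx], h2⟩
          · rw [hx] at hnr; exact absurd h2 hnr
        · rcases ih hyb with ⟨h1, h2⟩ | ⟨h1, h2⟩
          · rw [hx] at hnr; exact absurd h2 hnr
          · exact Or.inr ⟨by rw [hx], h2⟩

end RSND
namespace RSND

variable {V : Type*} [Fintype V]

lemma sameAtom_refl (G : SimpleGraph V) (s t u : V) : SameAtom G s t u u :=
  fun _ _ => Iff.rfl

lemma sameAtom_trans {G : SimpleGraph V} {s t u v w : V} (h1 : SameAtom G s t u v)
    (h2 : SameAtom G s t v w) : SameAtom G s t u w :=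
  fun A hA => (h1 A hA).trans (h2 A hA)

/-- Pairs in the demand set. -/
def GoodPair (G : SimpleGraph V) (s t : V) (u v : V) : Prop :=
  Terminal G s t u ∧ Terminal G s t v ∧ SameAtom G s t u v

/-- An edge between different atoms is forced. -/
lemma forced_of_not_sameAtom {G : SimpleGraph V} {s t a b : V} (hadj : G.Adj a b)
    (h : ¬ SameAtom G s t a b) : ForcedEdge G s t (s(a, b)) := by
  rw [SameAtom] at h
  push_neg at h
  obtain ⟨B, hB, hne⟩ := h
  refine ⟨B, hB.1, hB.2.1, hB.2.2, (adj_mem_delta hadj).2 ?_⟩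
  rcases hne with ⟨h1, h2⟩ | ⟨h1, h2⟩
  · exact Or.inl ⟨h1, h2⟩
  · exact Or.inr ⟨h2, h1⟩

lemma terminal_of_mem_forced {G : SimpleGraph V} {s t a : V} {e : Sym2 V}
    (hf : ForcedEdge G s t e) (ha : a ∈ e) : Terminal G s t a :=
  Or.inr (Or.inr ⟨e, hf, ha⟩)

lemma deleteEdges_inter_eq (H : SimpleGraph V) (F : Set (Sym2 V)) :
    H.deleteEdges (F ∩ H.edgeSet) = H.deleteEdges F := by
  apply SimpleGraph.ext
  ext a b
  simp only [SimpleGraph.deleteEdges_adj, Set.mem_inter_iff, SimpleGraph.mem_edgeSet]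
  constructor
  · rintro ⟨h1, h2⟩; exact ⟨h1, fun hFf => h2 ⟨hFf, h1⟩⟩
  · rintro ⟨h1, h2⟩; exact ⟨h1, fun hz => h2 hz.1⟩

/-- The backward direction of (ii): the demands imply the relative demand. -/
theorem backward {G H : SimpleGraph V} {s t : V} (h2 : TwoEdgeConnected G) (hHG : H ≤ G)
    (hforced : ∀ e, ForcedEdge G s t e → e ∈ H.edgeSet)
    (hRHS : ∀ u v : V, GoodPair G s t u v →
      ∀ F : Set (Sym2 V), F ⊆ H.edgeSet → F.ncard ≤ 2 → (H.deleteEdges F).Reachable u v) :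
    LHS G s t H := by
  intro F hF hcard hreach
  set F' : Set (Sym2 V) := F ∩ H.edgeSet with hF'def
  have hF'sub : F' ⊆ H.edgeSet := Set.inter_subset_right
  have hF'card : F'.ncard ≤ 2 :=
    le_trans (Set.ncard_le_ncard Set.inter_subset_left (finSym _)) hcard
  rw [← deleteEdges_inter_eq H F]
  by_contra hnot
  set K := H.deleteEdges F' with hK
  set X : Set V := {x | ∃ w, Terminal G s t w ∧ SameAtom G s t x w ∧ w ∈ comp K s} with hX
  have hsX : s ∈ X := ⟨s, Or.inl rfl, sameAtom_refl G s t s, mem_comp_self K s⟩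
  have htX : t ∉ X := by
    rintro ⟨w, hTw, hsw, hwW⟩
    have hr := hRHS w t ⟨hTw, Or.inr (Or.inl rfl), sameAtom_comm hsw⟩ F' hF'sub hF'card
    exact hnot (hwW.trans hr)
  have hcross : ∀ a b : V, G.Adj a b → a ∈ X → b ∉ X → s(a, b) ∈ F := by
    intro a b hadj haX hbX
    have hnsa : ¬ SameAtom G s t a b := by
      intro hsa
      obtain ⟨w, hTw, hsw, hwW⟩ := haX
      exact hbX ⟨w, hTw, sameAtom_trans (sameAtom_comm hsa) hsw, hwW⟩
    have hfe : ForcedEdge G s t (s(a, b)) := forced_of_not_sameAtom hadj hnsa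
    have hHadj : H.Adj a b := (H.mem_edgeSet).1 (hforced _ hfe)
    have haC : a ∈ comp K s := by
      obtain ⟨w, hTw, hsw, hwW⟩ := haX
      have hTa : Terminal G s t a := terminal_of_mem_forced hfe (Sym2.mem_mk_left a b)
      exact hwW.trans (hRHS w a ⟨hTw, hTa, sameAtom_comm hsw⟩ F' hF'sub hF'card)
    have hbC : b ∉ comp K s := by
      intro hbC
      have hTb : Terminal G s t b := terminal_of_mem_forced hfe (Sym2.mem_mk_right a b)
      exact hbX ⟨b, hTb, sameAtom_refl G s t b, hbC⟩
    by_contra hmem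
    have hKadj : K.Adj a b := by
      rw [hK, SimpleGraph.deleteEdges_adj]
      exact ⟨hHadj, fun h => hmem h.1⟩
    exact hbC (comp_adj_closed haC hKadj)
  have hsub : delta G X ⊆ F := by
    intro e he
    obtain ⟨a, b, hadj, rfl, ha, hb⟩ := delta_cross he
    exact hcross a b hadj ha hb
  exact cut_not_reachable hsX htX hsub hreach

end RSND
namespace RSND

variable {V : Type*} [Fintype V]

lemma pair_other {α : Type*} {S : Set α} {x : α} (h2 : S.ncard = 2) (hx : x ∈ S) :
    ∃ y, y ≠ x ∧ S = {x, y} := by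
  obtain ⟨a, b, hab, rfl⟩ := Set.ncard_eq_two.1 h2
  rcases hx with rfl | hx
  · exact ⟨b, fun h => hab h.symm, rfl⟩
  · simp only [Set.mem_singleton_iff] at hx
    subst hx
    exact ⟨a, hab, Set.pair_comm a x⟩

lemma eq_pair_of_subset {α : Type*} {S : Set α} {a b : α} (hS : S.ncard = 2)
    (hsub : S ⊆ {a, b}) : S = {a, b} := by
  refine Set.eq_of_subset_of_ncard_le hsub ?_ (Set.finite_singleton b |>.insert a)
  calc ({a, b} : Set α).ncard ≤ ({b} : Set α).ncard + 1 := Set.ncard_insert_le a {b}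
    _ ≤ 2 := by rw [Set.ncard_singleton]
    _ = S.ncard := hS.symm

lemma sym2_match {u v p q : V} (h : s(u, v) = s(p, q)) :
    (u = p ∧ v = q) ∨ (u = q ∧ v = p) := Sym2.eq_iff.1 h

lemma ncard_pair_le {α : Type*} (a b : α) : ({a, b} : Set α).ncard ≤ 2 := by
  calc ({a, b} : Set α).ncard ≤ ({b} : Set α).ncard + 1 := Set.ncard_insert_le a {b}
    _ ≤ 2 := by rw [Set.ncard_singleton]

lemma crossH_cases {G H : SimpleGraph V} (hHG : H ≤ G) {A : Set V} {e₁ ee : Sym2 V}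
    (hδ : delta G A = {e₁, ee}) {u v : V} (hadj : H.Adj u v) (hu : u ∈ A) (hv : v ∉ A) :
    s(u, v) = e₁ ∨ s(u, v) = ee := by
  have h : s(u, v) ∈ delta G A := (adj_mem_delta (hHG hadj)).2 (Or.inl ⟨hu, hv⟩)
  rw [hδ] at h
  simpa using h

lemma comp_cross_mem {H : SimpleGraph V} {F₀ : Set (Sym2 V)} {x u v : V} (hadj : H.Adj u v)
    (hu : u ∈ comp (H.deleteEdges F₀) x) (hv : v ∉ comp (H.deleteEdges F₀) x) :
    s(u, v) ∈ F₀ := by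
  by_contra h
  exact hv (comp_adj_closed hu ((SimpleGraph.deleteEdges_adj).2 ⟨hadj, h⟩))

lemma comp_cross_mem' {H : SimpleGraph V} {F₀ : Set (Sym2 V)} {x u v : V} (hadj : H.Adj u v)
    (hu : u ∉ comp (H.deleteEdges F₀) x) (hv : v ∈ comp (H.deleteEdges F₀) x) :
    s(u, v) ∈ F₀ := by
  have := comp_cross_mem hadj.symm hv hu
  rwa [Sym2.eq_swap] at this

lemma delta_forced {G : SimpleGraph V} {s t : V} {A : Set V} (hA : Cut G s t A) {e : Sym2 V}
    (he : e ∈ delta G A) : ForcedEdge G s t e := ⟨A, hA.1, hA.2.1, hA.2.2, he⟩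

lemma cut_pair_ne {G : SimpleGraph V} {s t : V} {A : Set V} (hA : Cut G s t A)
    {e₁ e₂ : Sym2 V} (hδ : delta G A = {e₁, e₂}) : e₁ ≠ e₂ := by
  intro h
  have := hA.2.2
  rw [hδ, h, Set.pair_eq_singleton, Set.ncard_singleton] at this
  omega

end RSND
namespace RSND

variable {V : Type*} [Fintype V]

set_option maxHeartbeats 1000000 in
/-- The hard closure case of the forcing argument. -/
lemma trapped_closure {G H : SimpleGraph V} {s t : V} (h2 : TwoEdgeConnected G) (hHG : H ≤ G)
    (hforced : ∀ e, ForcedEdge G s t e → e ∈ H.edgeSet)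
    (hL : LHS G s t H)
    {F₀ : Set (Sym2 V)} (hF₀H : F₀ ⊆ H.edgeSet)
    {y₁ y₂ : V} (hR3 : R3 G y₁ y₂) (hT₂ : Terminal G s t y₂)
    (hsZ : s ∉ comp (H.deleteEdges F₀) y₁) (htZ : t ∉ comp (H.deleteEdges F₀) y₁)
    (hy₂Z : y₂ ∉ comp (H.deleteEdges F₀) y₁)
    (hmiss : ∀ a b : V, G.Adj a b → ¬ H.Adj a b →
        (a ∈ comp (H.deleteEdges F₀) y₁ ∧ b ∈ comp (H.deleteEdges F₀) y₂) ∨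
        (b ∈ comp (H.deleteEdges F₀) y₁ ∧ a ∈ comp (H.deleteEdges F₀) y₂))
    {A₁ : Set V} (hA₁ : Cut G s t A₁) {r₁ : V} (hy₁A₁ : y₁ ∈ A₁)
    (hadj₁ : G.Adj y₁ r₁) {ee : Sym2 V} (hδA₁ : delta G A₁ = {s(y₁, r₁), ee})
    {b b' : Sym2 V} (hbF : b ∈ F₀) (hb'F : b' ∈ F₀) (hbb' : b ≠ b') (hF₀eq : F₀ = {b, b'})
    (hbrep : ∃ z o, b = s(z, o) ∧ z ∈ comp (H.deleteEdges F₀) y₁ ∧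
      o ∉ comp (H.deleteEdges F₀) y₁)
    (hb'rep : ∃ z o, b' = s(z, o) ∧ z ∈ comp (H.deleteEdges F₀) y₁ ∧
      o ∉ comp (H.deleteEdges F₀) y₁)
    {A₅ A₆ : Set V} (hA₅ : Cut G s t A₅) (hA₆ : Cut G s t A₆)
    (hδA₅ : delta G A₅ = {ee, b}) (hδA₆ : delta G A₆ = {ee, b'}) : False := by
  classical
  set Z := comp (H.deleteEdges F₀) y₁ with hZdef
  have hF₀c : F₀.ncard ≤ 2 := by rw [hF₀eq]; exact ncard_pair_le b b'
  have heeb : ee ≠ b := cut_pair_ne hA₅ hδA₅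
  have heeb' : ee ≠ b' := cut_pair_ne hA₆ hδA₆
  -- P and Q
  obtain ⟨hPcut, hQcut⟩ := cut_inter_union h2 hA₅ hA₆
  set P := A₅ ∩ A₆ with hPdef
  set Q := A₅ ∪ A₆ with hQdef
  have hPQ : P ⊆ Q := Set.inter_subset_left.trans Set.subset_union_left
  have hsubP : delta G P ⊆ {ee, b, b'} := by
    intro e he
    have h := delta_inter_sub G A₅ A₆ he
    rw [hδA₅, hδA₆] at h
    rcases h with h | h <;> simp only [Set.mem_insert_iff, Set.mem_singleton_iff] at h ⊢ <;> tauto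
  have hsubQ : delta G Q ⊆ {ee, b, b'} := by
    intro e he
    have h := delta_union_sub G A₅ A₆ he
    rw [hδA₅, hδA₆] at h
    rcases h with h | h <;> simp only [Set.mem_insert_iff, Set.mem_singleton_iff] at h ⊢ <;> tauto
  have hinterPQ : delta G P ∩ delta G Q ⊆ {ee} := by
    intro e he
    have h := delta_inter_union_sub G A₅ A₆ he
    rw [hδA₅, hδA₆] at h
    obtain ⟨h1, h2⟩ := h
    simp only [Set.mem_insert_iff, Set.mem_singleton_iff] at h1 h2 ⊢
    rcases h1 with rfl | rfl
    · rfl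
    · rcases h2 with h | h
      · exact absurd h.symm heeb
      · exact absurd h hbb'
  have hPQsum := Set.ncard_union_add_ncard_inter (delta G P) (delta G Q) (finSym _) (finSym _)
  have hint_le : (delta G P ∩ delta G Q).ncard ≤ 1 := by
    calc (delta G P ∩ delta G Q).ncard ≤ ({ee} : Set (Sym2 V)).ncard :=
          Set.ncard_le_ncard hinterPQ (Set.finite_singleton _)
      _ = 1 := Set.ncard_singleton _
  have hun_ge : 3 ≤ (delta G P ∪ delta G Q).ncard := by
    rw [hPcut.2.2, hQcut.2.2] at hPQsum; omega
  have heeP : ee ∈ delta G P := by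
    by_contra hee
    have hsub2 : delta G P ⊆ {b, b'} := by
      intro e he
      have h := hsubP he
      simp only [Set.mem_insert_iff, Set.mem_singleton_iff] at h ⊢
      rcases h with rfl | h
      · exact absurd he hee
      · exact h
    have hPeq : delta G P = {b, b'} := eq_pair_of_subset hPcut.2.2 hsub2
    have hx : ∃ x ∈ delta G Q, x = b ∨ x = b' := by
      by_contra hx
      push_neg at hx
      have hq : delta G Q ⊆ {ee} := by
        intro e he
        have h3 := hsubQ he
        simp only [Set.mem_insert_iff, Set.mem_singleton_iff] at h3 ⊢
        rcases h3 with rfl | h3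
        · rfl
        · rcases h3 with rfl | rfl
          · exact absurd rfl (hx _ he).1
          · exact absurd rfl (hx _ he).2
      have := Set.ncard_le_ncard hq (Set.finite_singleton _)
      rw [hQcut.2.2, Set.ncard_singleton] at this; omega
    obtain ⟨x, hxQ, hxor⟩ := hx
    have hxP : x ∈ delta G P := by
      rw [hPeq]
      simp only [Set.mem_insert_iff, Set.mem_singleton_iff]
      exact hxor
    have hxee := hinterPQ ⟨hxP, hxQ⟩
    simp only [Set.mem_singleton_iff] at hxee
    rcases hxor with rfl | rfl
    · exact heeb hxee.symm
    · exact heeb' hxee.symm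
  have heeQ : ee ∈ delta G Q := by
    by_contra hee
    have hsub2 : delta G Q ⊆ {b, b'} := by
      intro e he
      have h := hsubQ he
      simp only [Set.mem_insert_iff, Set.mem_singleton_iff] at h ⊢
      rcases h with rfl | h
      · exact absurd he hee
      · exact h
    have hQeq : delta G Q = {b, b'} := eq_pair_of_subset hQcut.2.2 hsub2
    have hx : ∃ x ∈ delta G P, x = b ∨ x = b' := by
      by_contra hx
      push_neg at hx
      have hq : delta G P ⊆ {ee} := by
        intro e he
        have h3 := hsubP he
        simp only [Set.mem_insert_iff, Set.mem_singleton_iff] at h3 ⊢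
        rcases h3 with rfl | h3
        · rfl
        · rcases h3 with rfl | rfl
          · exact absurd rfl (hx _ he).1
          · exact absurd rfl (hx _ he).2
      have := Set.ncard_le_ncard hq (Set.finite_singleton _)
      rw [hPcut.2.2, Set.ncard_singleton] at this; omega
    obtain ⟨x, hxP, hxor⟩ := hx
    have hxQ : x ∈ delta G Q := by
      rw [hQeq]
      simp only [Set.mem_insert_iff, Set.mem_singleton_iff]
      exact hxor
    have hxee := hinterPQ ⟨hxP, hxQ⟩
    simp only [Set.mem_singleton_iff] at hxee
    rcases hxor with rfl | rfl
    · exact heeb hxee.symm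
    · exact heeb' hxee.symm
  obtain ⟨cP, hcPne, hδPeq⟩ := pair_other hPcut.2.2 heeP
  obtain ⟨cQ, hcQne, hδQeq⟩ := pair_other hQcut.2.2 heeQ
  have hcPmem : cP = b ∨ cP = b' := by
    have hm : cP ∈ delta G P := by
      rw [hδPeq]; exact Set.mem_insert_of_mem _ rfl
    have h := hsubP hm
    simp only [Set.mem_insert_iff, Set.mem_singleton_iff] at h
    rcases h with h | h
    · exact absurd h hcPne
    · exact h
  have hcQmem : cQ = b ∨ cQ = b' := by
    have hm : cQ ∈ delta G Q := by
      rw [hδQeq]; exact Set.mem_insert_of_mem _ rfl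
    have h := hsubQ hm
    simp only [Set.mem_insert_iff, Set.mem_singleton_iff] at h
    rcases h with h | h
    · exact absurd h hcQne
    · exact h
  have hcPcQ : cP ≠ cQ := by
    intro h
    have hsub3 : delta G P ∪ delta G Q ⊆ {ee, cP} := by
      rw [hδPeq, hδQeq, ← h, Set.union_self]
    have := Set.ncard_le_ncard hsub3 (finSym _)
    have h4 := ncard_pair_le ee cP
    omega
  have hccbb : (cP = b ∧ cQ = b') ∨ (cP = b' ∧ cQ = b) := by
    rcases hcPmem with h1 | h1 <;> rcases hcQmem with h2 | h2
    · exact absurd (h1.trans h2.symm) hcPcQ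
    · exact Or.inl ⟨h1, h2⟩
    · exact Or.inr ⟨h1, h2⟩
    · exact absurd (h1.trans h2.symm) hcPcQ
  -- the middle piece M
  set M := Q \ P with hMdef
  have hsM : s ∉ M := fun h => h.2 hPcut.1
  have htM : t ∉ M := fun h => hQcut.2.1 h.1
  have hMdelta : delta G M = {cP, cQ} := by
    apply Set.Subset.antisymm
    · intro e he
      obtain ⟨u, v, hadj, rfl, hu, hv⟩ := delta_cross he
      have hvcase : v ∈ P ∨ v ∉ Q := by
        by_cases hvQ : v ∈ Q
        · left; by_contra hvP; exact hv ⟨hvQ, hvP⟩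
        · right; exact hvQ
      rcases hvcase with hvP | hvQ
      · have heP : s(u, v) ∈ delta G P := (adj_mem_delta hadj).2 (Or.inr ⟨hvP, hu.2⟩)
        rw [hδPeq] at heP
        simp only [Set.mem_insert_iff, Set.mem_singleton_iff] at heP
        rcases heP with hee' | h
        · exfalso
          have heeQ' : s(u, v) ∈ delta G Q := by rw [hee']; exact heeQ
          rcases (adj_mem_delta hadj).1 heeQ' with ⟨_, h⟩ | ⟨_, h⟩
          · exact h (hPQ hvP)
          · exact h hu.1
        · rw [h]; exact Set.mem_insert _ _
      · have heQ : s(u, v) ∈ delta G Q := (adj_mem_delta hadj).2 (Or.inl ⟨hu.1, hvQ⟩)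
        rw [hδQeq] at heQ
        simp only [Set.mem_insert_iff, Set.mem_singleton_iff] at heQ
        rcases heQ with hee' | h
        · exfalso
          have heeP' : s(u, v) ∈ delta G P := by rw [hee']; exact heeP
          rcases (adj_mem_delta hadj).1 heeP' with ⟨h', _⟩ | ⟨h', _⟩
          · exact hu.2 h'
          · exact hvQ (hPQ h')
        · rw [h]; exact Set.mem_insert_of_mem _ rfl
    · intro e he
      simp only [Set.mem_insert_iff, Set.mem_singleton_iff] at he
      rcases he with he | he
      all_goals rw [he]
      · have hcPP : cP ∈ delta G P := by rw [hδPeq]; exact Set.mem_insert_of_mem _ rfl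
        obtain ⟨x, y, hadj, hrep, hx, hy⟩ := delta_cross hcPP
        have hcPQ : cP ∉ delta G Q := by
          intro h
          have := hinterPQ ⟨hcPP, h⟩
          simp only [Set.mem_singleton_iff] at this
          exact hcPne this
        have hxyQ : x ∈ Q ↔ y ∈ Q := by
          by_contra hiff
          refine hcPQ ?_
          rw [hrep]
          rw [adj_mem_delta hadj]
          tauto
        have hyQ : y ∈ Q := hxyQ.1 (hPQ hx)
        rw [hrep]
        exact (adj_mem_delta hadj).2 (Or.inr ⟨⟨hyQ, hy⟩, fun hM' => hM'.2 hx⟩)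
      · have hcQQ : cQ ∈ delta G Q := by rw [hδQeq]; exact Set.mem_insert_of_mem _ rfl
        obtain ⟨x, y, hadj, hrep, hx, hy⟩ := delta_cross hcQQ
        have hcQP : cQ ∉ delta G P := by
          intro h
          have := hinterPQ ⟨h, hcQQ⟩
          simp only [Set.mem_singleton_iff] at this
          exact hcQne this
        have hxyP : x ∈ P ↔ y ∈ P := by
          by_contra hiff
          refine hcQP ?_
          rw [hrep]
          rw [adj_mem_delta hadj]
          tauto
        have hxP : x ∉ P := fun h => hy (hPQ (hxyP.1 h))
        rw [hrep]
        exact (adj_mem_delta hadj).2 (Or.inl ⟨⟨hx, hxP⟩, fun hM' => hy hM'.1⟩)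
  have hsetcc : ({cP, cQ} : Set (Sym2 V)) = {b, b'} := by
    rcases hccbb with ⟨rfl, rfl⟩ | ⟨rfl, rfl⟩
    · rfl
    · exact Set.pair_comm _ _
  have hMdeltaF : delta G M = F₀ := by rw [hMdelta, hsetcc, hF₀eq]
  have hMclosed : ∀ u v : V, (H.deleteEdges F₀).Adj u v → u ∈ M → v ∉ M → False := by
    intro u v hKadj hu hv
    have hd := (SimpleGraph.deleteEdges_adj).1 hKadj
    have hGadj : G.Adj u v := hHG hd.1
    have hmem : s(u, v) ∈ delta G M := (adj_mem_delta hGadj).2 (Or.inl ⟨hu, hv⟩)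
    rw [hMdeltaF] at hmem
    exact hd.2 hmem
  have hbsplit : ∀ e ∈ F₀, ∃ z o, e = s(z, o) ∧ z ∈ Z ∧ o ∉ Z := by
    intro e he
    rw [hF₀eq] at he
    simp only [Set.mem_insert_iff, Set.mem_singleton_iff] at he
    rcases he with rfl | rfl
    · exact hbrep
    · exact hb'rep
  by_cases hy₁M : y₁ ∈ M
  · -- the component Z lies inside M
    have hZM : Z ⊆ M := comp_subset_closed hMclosed hy₁M
    by_cases hMZ : (M \ Z).Nonempty
    · -- M \ Z is H-isolated; find a missing edge and use y₂'s terminal edge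
      have hclosed : ∀ u v : V, H.Adj u v → u ∈ M \ Z → v ∉ M \ Z → False := by
        intro u v hadj hu hv
        by_cases hvM : v ∈ M
        · have hvZ : v ∈ Z := by by_contra h; exact hv ⟨hvM, h⟩
          have heF : s(u, v) ∈ F₀ := comp_cross_mem' hadj hu.2 hvZ
          have hmem : s(u, v) ∈ delta G M := by rw [hMdeltaF]; exact heF
          rcases (adj_mem_delta (hHG hadj)).1 hmem with ⟨_, h⟩ | ⟨_, h⟩
          · exact h hvM
          · exact h hu.1
        · have hmem : s(u, v) ∈ delta G M := (adj_mem_delta (hHG hadj)).2 (Or.inl ⟨hu.1, hvM⟩)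
          have heF : s(u, v) ∈ F₀ := by rw [← hMdeltaF]; exact hmem
          obtain ⟨z, o, hrep, hz, ho⟩ := hbsplit _ heF
          rcases sym2_match hrep with ⟨h1, h2⟩ | ⟨h1, h2⟩
          · exact hu.2 (by rw [h1]; exact hz)
          · exact hvM (hZM (by rw [h2]; exact hz))
      have hd : 2 ≤ (delta G (M \ Z)).ncard :=
        two_le_delta h2 hMZ ⟨s, fun h => hsM h.1⟩
      obtain ⟨e₂, he₂⟩ : (delta G (M \ Z)).Nonempty := (Set.ncard_pos (finSym _)).1 (by omega)
      obtain ⟨a₂, b₂, hadj₂, hrep₂, ha₂, hb₂⟩ := delta_cross he₂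
      have hnH : ¬ H.Adj a₂ b₂ := fun h => hclosed a₂ b₂ h ha₂ hb₂
      rcases hmiss a₂ b₂ hadj₂ hnH with ⟨h1, _⟩ | ⟨_, hax⟩
      · exact ha₂.2 h1
      · have hC₂sub : comp (H.deleteEdges F₀) y₂ ⊆ M \ Z := by
          have hsub := comp_subset_closed (K := H.deleteEdges F₀) (X := M \ Z)
            (fun u v hK hu hv => hclosed u v ((SimpleGraph.deleteEdges_adj).1 hK).1 hu hv) ha₂
          rw [comp_eq_of_mem hax] at hsub
          exact hsub
        have hy₂M : y₂ ∈ M \ Z := hC₂sub (mem_comp_self _ y₂)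
        have hy₂s : y₂ ≠ s := fun h => hsM (by rw [← h]; exact hy₂M.1)
        have hy₂t : y₂ ≠ t := fun h => htM (by rw [← h]; exact hy₂M.1)
        obtain ⟨e₃, hf₃, hmem₃⟩ : ∃ e, ForcedEdge G s t e ∧ y₂ ∈ e := by
          rcases hT₂ with h | h | h
          · exact absurd h hy₂s
          · exact absurd h hy₂t
          · exact h
        have hrep₃ : e₃ = s(y₂, Sym2.Mem.other hmem₃) := (Sym2.other_spec hmem₃).symm
        set r₂ := Sym2.Mem.other hmem₃ with hr₂def
        have hadj₃ : G.Adj y₂ r₂ := (G.mem_edgeSet).1 (by rw [← hrep₃]; exact forced_mem_edgeSet hf₃)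
        have hH₃ : H.Adj y₂ r₂ := (H.mem_edgeSet).1 (by rw [← hrep₃]; exact hforced _ hf₃)
        have hr₂M : r₂ ∈ M \ Z := by
          by_contra h
          exact hclosed y₂ r₂ hH₃ hy₂M h
        obtain ⟨A₂, hc1, hc2, hc3, hc4⟩ := hf₃
        rw [hrep₃] at hc4
        obtain ⟨g₂', hgne, hδA₂⟩ := pair_other hc3 hc4
        refine star h2 hL (X := A₂ \ (M \ Z)) (F'' := {g₂'})
          ⟨hc1, fun h => hsM h.1⟩ (fun h => hc2 h.1) ?_ ?_ noncut_singleton ?_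
        · intro e he
          simp only [Set.mem_singleton_iff] at he
          subst he
          refine delta_subset_edgeSet G A₂ ?_
          rw [hδA₂]; exact Set.mem_insert_of_mem _ rfl
        · rw [Set.ncard_singleton]; omega
        · intro u v hadj hu hv
          simp only [Set.mem_singleton_iff]
          by_cases hvMZ : v ∈ M \ Z
          · exact (hclosed v u hadj.symm hvMZ hu.2).elim
          · have hvA₂ : v ∉ A₂ := fun h => hv ⟨h, hvMZ⟩
            rcases crossH_cases hHG hδA₂ hadj hu.1 hvA₂ with h | h
            · exfalso
              rcases sym2_match h with ⟨h1, _⟩ | ⟨h1, _⟩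
              · exact hu.2 (by rw [h1]; exact hy₂M)
              · exact hu.2 (by rw [h1]; exact hr₂M)
            · exact h
    · -- Z = M : contradiction with R3 y₁ y₂
      rw [Set.not_nonempty_iff_eq_empty, Set.diff_eq_empty] at hMZ
      have hZeq : Z = M := le_antisymm hZM hMZ
      have hcard : (delta G Z).ncard = 2 := by
        rw [hZeq, hMdeltaF, hF₀eq]
        exact Set.ncard_pair hbb'
      exact no_sep_of_r3 hR3 (mem_comp_self _ y₁) hy₂Z hcard
  · -- Z is disjoint from M
    have hZMdisj : ∀ x ∈ Z, x ∉ M := by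
      have hsub : Z ⊆ Mᶜ := comp_subset_closed
        (fun u v hK hu hv => hMclosed v u hK.symm (by simpa using hv) (by simpa using hu))
        (by simpa using hy₁M)
      exact fun x hx => hsub hx
    obtain ⟨zb, ob, hbrep', hzb, hob⟩ := hbrep
    obtain ⟨zb', ob', hb'rep', hzb', hob'⟩ := hb'rep
    have hbadj : G.Adj zb ob := by
      have hmm : b ∈ G.edgeSet := SimpleGraph.edgeSet_mono hHG (hF₀H hbF)
      rw [hbrep'] at hmm
      exact (G.mem_edgeSet).1 hmm
    have hb'adj : G.Adj zb' ob' := by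
      have hmm : b' ∈ G.edgeSet := SimpleGraph.edgeSet_mono hHG (hF₀H hb'F)
      rw [hb'rep'] at hmm
      exact (G.mem_edgeSet).1 hmm
    have hobM : ob ∈ M := by
      have hbM : b ∈ delta G M := by rw [hMdeltaF]; exact hbF
      rw [hbrep'] at hbM
      rcases (adj_mem_delta hbadj).1 hbM with ⟨h1, _⟩ | ⟨h1, _⟩
      · exact absurd h1 (hZMdisj _ hzb)
      · exact h1
    have hob'M : ob' ∈ M := by
      have hbM : b' ∈ delta G M := by rw [hMdeltaF]; exact hb'F
      rw [hb'rep'] at hbM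
      rcases (adj_mem_delta hb'adj).1 hbM with ⟨h1, _⟩ | ⟨h1, _⟩
      · exact absurd h1 (hZMdisj _ hzb')
      · exact h1
    have hZspan : ∃ zin ∈ Z, zin ∈ P ∧ ∃ zout ∈ Z, zout ∉ Q := by
      rcases hccbb with ⟨hcb, hcb'⟩ | ⟨hcb, hcb'⟩
      · refine ⟨zb, hzb, ?_, zb', hzb', ?_⟩
        · have hbP : b ∈ delta G P := by rw [hδPeq, hcb]; exact Set.mem_insert_of_mem _ rfl
          rw [hbrep'] at hbP
          rcases (adj_mem_delta hbadj).1 hbP with ⟨h1, _⟩ | ⟨h1, _⟩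
          · exact h1
          · exact absurd h1 hobM.2
        · have hbQ : b' ∈ delta G Q := by rw [hδQeq, hcb']; exact Set.mem_insert_of_mem _ rfl
          rw [hb'rep'] at hbQ
          rcases (adj_mem_delta hb'adj).1 hbQ with ⟨_, h2⟩ | ⟨_, h2⟩
          · exact absurd hob'M.1 h2
          · exact h2
      · refine ⟨zb', hzb', ?_, zb, hzb, ?_⟩
        · have hbP : b' ∈ delta G P := by rw [hδPeq, hcb]; exact Set.mem_insert_of_mem _ rfl
          rw [hb'rep'] at hbP
          rcases (adj_mem_delta hb'adj).1 hbP with ⟨h1, _⟩ | ⟨h1, _⟩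
          · exact h1
          · exact absurd h1 hob'M.2
        · have hbQ : b ∈ delta G Q := by rw [hδQeq, hcb']; exact Set.mem_insert_of_mem _ rfl
          rw [hbrep'] at hbQ
          rcases (adj_mem_delta hbadj).1 hbQ with ⟨_, h2⟩ | ⟨_, h2⟩
          · exact absurd hobM.1 h2
          · exact h2
    obtain ⟨zin, hzinZ, hzinP, zout, hzoutZ, hzoutQ⟩ := hZspan
    have hreachio : (H.deleteEdges F₀).Reachable zin zout := hzinZ.symm.trans hzoutZ
    obtain ⟨α, β, hKαβ, hαP, hβP, hrα, hrβ⟩ := reach_cross hreachio hzinP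
      (fun h => hzoutQ (hPQ h))
    have hdK := (SimpleGraph.deleteEdges_adj).1 hKαβ
    have hGαβ : G.Adj α β := hHG hdK.1
    have hmemP : s(α, β) ∈ delta G P := (adj_mem_delta hGαβ).2 (Or.inl ⟨hαP, hβP⟩)
    have heqee : s(α, β) = ee := by
      rw [hδPeq] at hmemP
      simp only [Set.mem_insert_iff, Set.mem_singleton_iff] at hmemP
      rcases hmemP with h | h
      · exact h
      · exfalso
        refine hdK.2 ?_
        rw [h, hF₀eq]
        rcases hccbb with ⟨hcb, _⟩ | ⟨hcb, _⟩
        · rw [hcb]; exact Set.mem_insert _ _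
        · rw [hcb]; exact Set.mem_insert_of_mem _ rfl
    have hαZ : α ∈ Z := hzinZ.trans hrα
    have hβZ : β ∈ Z := hzoutZ.trans hrβ.symm
    by_cases hstK : (H.deleteEdges F₀).Reachable s t
    · obtain ⟨γ, δ', hKγδ, hγA₁, hδ'A₁, hrγ, hrδ⟩ := reach_cross hstK hA₁.1 hA₁.2.1
      have hdK₁ := (SimpleGraph.deleteEdges_adj).1 hKγδ
      have hGγδ : G.Adj γ δ' := hHG hdK₁.1
      have hmem₁ : s(γ, δ') ∈ delta G A₁ := (adj_mem_delta hGγδ).2 (Or.inl ⟨hγA₁, hδ'A₁⟩)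
      rw [hδA₁] at hmem₁
      simp only [Set.mem_insert_iff, Set.mem_singleton_iff] at hmem₁
      rcases hmem₁ with h | h
      · rcases sym2_match h with ⟨h1, _⟩ | ⟨_, h2⟩
        · exact hsZ (by rw [h1] at hrγ; exact hrγ.symm)
        · exact htZ (by rw [h2] at hrδ; exact hrδ)
      · have h' := h.trans heqee.symm
        rcases sym2_match h' with ⟨h1, _⟩ | ⟨h1, _⟩
        · exact hsZ (by rw [h1] at hrγ; exact hαZ.trans hrγ.symm)
        · exact hsZ (by rw [h1] at hrγ; exact hβZ.trans hrγ.symm)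
    · have hF₀G : F₀ ⊆ G.edgeSet := fun e he => SimpleGraph.edgeSet_mono hHG (hF₀H he)
      have hcut : ∃ A', Cut G s t A' ∧ delta G A' ⊆ F₀ := by
        by_contra hno
        push_neg at hno
        exact hstK (hL F₀ hF₀G hF₀c (noncut_reachable h2 hF₀c (fun A hA => hno A hA)))
      obtain ⟨A', hA', hsub'⟩ := hcut
      have hδA' : delta G A' = F₀ := by
        rw [hF₀eq] at hsub' ⊢
        exact eq_pair_of_subset hA'.2.2 hsub'
      have hδeq : delta G A' = delta G M := by rw [hδA', hMdeltaF]
      rcases eq_or_compl_of_delta_eq h2 hδeq with h | h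
      · exact hsM (by rw [← h]; exact hA'.1)
      · refine htM ?_
        have h1 := hA'.2.1
        rw [h] at h1
        simpa using h1

end RSND
namespace RSND

variable {V : Type*} [Fintype V]

set_option maxHeartbeats 1000000 in
lemma trapped_core {G H : SimpleGraph V} {s t : V} (h2 : TwoEdgeConnected G) (hHG : H ≤ G)
    (hforced : ∀ e, ForcedEdge G s t e → e ∈ H.edgeSet)
    (hL : LHS G s t H)
    {F₀ : Set (Sym2 V)} (hF₀H : F₀ ⊆ H.edgeSet) (hF₀c : F₀.ncard ≤ 2)
    {y₁ y₂ : V} (hR3 : R3 G y₁ y₂) (hT₂ : Terminal G s t y₂)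
    (hsZ : s ∉ comp (H.deleteEdges F₀) y₁) (htZ : t ∉ comp (H.deleteEdges F₀) y₁)
    (hy₂Z : y₂ ∉ comp (H.deleteEdges F₀) y₁)
    (hmiss : ∀ a b : V, G.Adj a b → ¬ H.Adj a b →
        (a ∈ comp (H.deleteEdges F₀) y₁ ∧ b ∈ comp (H.deleteEdges F₀) y₂) ∨
        (b ∈ comp (H.deleteEdges F₀) y₁ ∧ a ∈ comp (H.deleteEdges F₀) y₂))
    {A₁ : Set V} (hA₁ : Cut G s t A₁) {r₁ : V} (hy₁A₁ : y₁ ∈ A₁)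
    (hadj₁ : G.Adj y₁ r₁) (hg₁ : s(y₁, r₁) ∈ delta G A₁) : False := by
  classical
  set Z := comp (H.deleteEdges F₀) y₁ with hZdef
  have hy₁Z : y₁ ∈ Z := mem_comp_self _ y₁
  obtain ⟨ee, heene, hδA₁⟩ := pair_other hA₁.2.2 hg₁
  have hr₁A₁ : r₁ ∉ A₁ := by
    rcases (adj_mem_delta hadj₁).1 hg₁ with ⟨_, h⟩ | ⟨_, h⟩
    · exact h
    · exact absurd hy₁A₁ h
  have heeδ : ee ∈ delta G A₁ := by rw [hδA₁]; exact Set.mem_insert_of_mem _ rfl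
  have heeG : ee ∈ G.edgeSet := delta_subset_edgeSet G A₁ heeδ
  by_cases Pin : ∃ e ∈ F₀, ∃ z o, e = s(z, o) ∧ z ∈ Z ∧ o ∈ A₁ ∧ o ∉ Z
  case neg =>
    refine star h2 hL (X := A₁ \ Z) (F'' := {ee}) ⟨hA₁.1, hsZ⟩ (fun h => hA₁.2.1 h.1)
      (by intro e he; simp only [Set.mem_singleton_iff] at he; subst he; exact heeG)
      (by rw [Set.ncard_singleton]; omega) noncut_singleton ?_
    intro u v hadj hu hv
    simp only [Set.mem_singleton_iff]
    by_cases hvZ : v ∈ Z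
    · exfalso
      have heF : s(u, v) ∈ F₀ := comp_cross_mem' hadj hu.2 hvZ
      exact Pin ⟨s(u, v), heF, v, u, Sym2.eq_swap, hvZ, hu.1, hu.2⟩
    · have hvA₁ : v ∉ A₁ := fun h => hv ⟨h, hvZ⟩
      rcases crossH_cases hHG hδA₁ hadj hu.1 hvA₁ with h | h
      · exfalso
        rcases sym2_match h with ⟨h1, _⟩ | ⟨_, h2⟩
        · exact hu.2 (by rw [h1]; exact hy₁Z)
        · exact hvZ (by rw [h2]; exact hy₁Z)
      · exact h
  obtain ⟨b, hbF, zb, ob, hbrep, hzb, hobA, hobZ⟩ := Pin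
  by_cases Pout : ∃ e ∈ F₀, ∃ z o, e = s(z, o) ∧ z ∈ Z ∧ o ∉ A₁ ∧ o ∉ Z
  case neg =>
    refine star h2 hL (X := A₁ ∪ Z) (F'' := {ee}) (Or.inl hA₁.1)
      (fun h => h.elim hA₁.2.1 htZ)
      (by intro e he; simp only [Set.mem_singleton_iff] at he; subst he; exact heeG)
      (by rw [Set.ncard_singleton]; omega) noncut_singleton ?_
    intro u v hadj hu hv
    simp only [Set.mem_singleton_iff]
    by_cases huZ : u ∈ Z
    · exfalso
      have heF : s(u, v) ∈ F₀ := comp_cross_mem hadj huZ (fun h => hv (Or.inr h))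
      exact Pout ⟨s(u, v), heF, u, v, rfl, huZ, fun h => hv (Or.inl h), fun h => hv (Or.inr h)⟩
    · have huA₁ : u ∈ A₁ := by rcases hu with h | h; exact h; exact absurd h huZ
      have hvA₁ : v ∉ A₁ := fun h => hv (Or.inl h)
      rcases crossH_cases hHG hδA₁ hadj huA₁ hvA₁ with h | h
      · exfalso
        rcases sym2_match h with ⟨h1, _⟩ | ⟨_, h2⟩
        · exact huZ (by rw [h1]; exact hy₁Z)
        · exact hv (Or.inr (by rw [h2]; exact hy₁Z))
      · exact h
  obtain ⟨b', hb'F, zb', ob', hb'rep, hzb', hob'A, hob'Z⟩ := Pout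
  have hbb' : b ≠ b' := by
    intro h
    rw [h, hb'rep] at hbrep
    rcases sym2_match hbrep with ⟨h1, h2⟩ | ⟨h1, h2⟩
    · exact hob'A (by rw [h2]; exact hobA)
    · exact hobZ (by rw [← h1]; exact hzb')
  have hF₀eq : F₀ = {b, b'} := by
    have hsub : ({b, b'} : Set (Sym2 V)) ⊆ F₀ := by
      intro e he
      rcases (by simpa using he : e = b ∨ e = b') with rfl | rfl
      · exact hbF
      · exact hb'F
    exact (Set.eq_of_subset_of_ncard_le hsub
      (by rw [Set.ncard_pair hbb']; exact hF₀c) (finSym _)).symm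
  by_cases hcut5 : ∃ A₅, Cut G s t A₅ ∧ delta G A₅ ⊆ {ee, b}
  · by_cases hcut6 : ∃ A₆, Cut G s t A₆ ∧ delta G A₆ ⊆ {ee, b'}
    · obtain ⟨A₅, hA₅, hsub₅⟩ := hcut5
      obtain ⟨A₆, hA₆, hsub₆⟩ := hcut6
      exact trapped_closure h2 hHG hforced hL hF₀H hR3 hT₂ hsZ htZ hy₂Z hmiss hA₁ hy₁A₁
        hadj₁ hδA₁ hbF hb'F hbb' hF₀eq ⟨zb, ob, hbrep, hzb, hobZ⟩
        ⟨zb', ob', hb'rep, hzb', hob'Z⟩ hA₅ hA₆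
        (eq_pair_of_subset hA₅.2.2 hsub₅) (eq_pair_of_subset hA₆.2.2 hsub₆)
    · push_neg at hcut6
      refine star h2 hL (X := A₁ ∪ Z) (F'' := {ee, b'}) (Or.inl hA₁.1)
        (fun h => h.elim hA₁.2.1 htZ) ?_ (ncard_pair_le _ _) (fun A hA => hcut6 A hA) ?_
      · intro e he
        rcases (by simpa using he : e = ee ∨ e = b') with rfl | rfl
        · exact heeG
        · exact SimpleGraph.edgeSet_mono hHG (hF₀H hb'F)
      · intro u v hadj hu hv
        by_cases huZ : u ∈ Z
        · have heF : s(u, v) ∈ F₀ := comp_cross_mem hadj huZ (fun h => hv (Or.inr h))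
          rw [hF₀eq] at heF
          rcases (by simpa using heF : s(u, v) = b ∨ s(u, v) = b') with h | h
          · exfalso
            rw [hbrep] at h
            rcases sym2_match h with ⟨_, h2⟩ | ⟨_, h2⟩
            · exact hv (Or.inl (by rw [h2]; exact hobA))
            · exact hv (Or.inr (by rw [h2]; exact hzb))
          · rw [h]; exact Set.mem_insert_of_mem _ rfl
        · have huA₁ : u ∈ A₁ := by rcases hu with h | h; exact h; exact absurd h huZ
          have hvA₁ : v ∉ A₁ := fun h => hv (Or.inl h)
          rcases crossH_cases hHG hδA₁ hadj huA₁ hvA₁ with h | h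
          · exfalso
            rcases sym2_match h with ⟨h1, _⟩ | ⟨_, h2⟩
            · exact huZ (by rw [h1]; exact hy₁Z)
            · exact hv (Or.inr (by rw [h2]; exact hy₁Z))
          · rw [h]; exact Set.mem_insert _ _
  · push_neg at hcut5
    refine star h2 hL (X := A₁ \ Z) (F'' := {ee, b}) ⟨hA₁.1, hsZ⟩ (fun h => hA₁.2.1 h.1) ?_
      (ncard_pair_le _ _) (fun A hA => hcut5 A hA) ?_
    · intro e he
      rcases (by simpa using he : e = ee ∨ e = b) with rfl | rfl
      · exact heeG
      · exact SimpleGraph.edgeSet_mono hHG (hF₀H hbF)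
    · intro u v hadj hu hv
      by_cases hvZ : v ∈ Z
      · have heF : s(u, v) ∈ F₀ := comp_cross_mem' hadj hu.2 hvZ
        rw [hF₀eq] at heF
        rcases (by simpa using heF : s(u, v) = b ∨ s(u, v) = b') with h | h
        · rw [h]; exact Set.mem_insert_of_mem _ rfl
        · exfalso
          rw [hb'rep] at h
          rcases sym2_match h with ⟨h1, _⟩ | ⟨h1, _⟩
          · exact hu.2 (by rw [h1]; exact hzb')
          · exact hob'A (by rw [← h1]; exact hu.1)
      · have hvA₁ : v ∉ A₁ := fun h => hv ⟨h, hvZ⟩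
        rcases crossH_cases hHG hδA₁ hadj hu.1 hvA₁ with h | h
        · exfalso
          rcases sym2_match h with ⟨h1, _⟩ | ⟨_, h2⟩
          · exact hu.2 (by rw [h1]; exact hy₁Z)
          · exact hvZ (by rw [h2]; exact hy₁Z)
        · rw [h]; exact Set.mem_insert _ _

end RSND
namespace RSND

variable {V : Type*} [Fintype V]

set_option maxHeartbeats 1000000 in
theorem forward_aux {G : SimpleGraph V} {s t : V} (h2 : TwoEdgeConnected G) :
    ∀ n : ℕ, ∀ H : SimpleGraph V, (G.edgeSet \ H.edgeSet).ncard = n →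
    H ≤ G → (∀ e, ForcedEdge G s t e → e ∈ H.edgeSet) → LHS G s t H →
    ∀ u v : V, GoodPair G s t u v →
    ∀ F₀ : Set (Sym2 V), F₀ ⊆ H.edgeSet → F₀.ncard ≤ 2 →
      (H.deleteEdges F₀).Reachable u v := by
  intro n
  induction n using Nat.strong_induction_on with
  | _ n ih =>
    intro H hn hHG hforced hL u v hgp F₀ hF₀H hF₀c
    by_cases hdiff : (G.edgeSet \ H.edgeSet) = ∅
    · have hEeq : H.edgeSet = G.edgeSet := by
        apply Set.Subset.antisymm (SimpleGraph.edgeSet_mono hHG)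
        intro e he
        by_contra h
        exact (Set.eq_empty_iff_forall_notMem.1 hdiff e) ⟨he, h⟩
      have hHGeq : H = G := SimpleGraph.edgeSet_inj.1 hEeq
      subst hHGeq
      exact goodPair_r3 h2 hgp.1 hgp.2.1 hgp.2.2 F₀ (fun e he => hF₀H he) hF₀c
    · by_contra hnr
      have hR3 : R3 G u v := goodPair_r3 h2 hgp.1 hgp.2.1 hgp.2.2
      have hmiss : ∀ a b : V, G.Adj a b → ¬ H.Adj a b →
          (a ∈ comp (H.deleteEdges F₀) u ∧ b ∈ comp (H.deleteEdges F₀) v) ∨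
          (b ∈ comp (H.deleteEdges F₀) u ∧ a ∈ comp (H.deleteEdges F₀) v) := by
        intro a b hGadj hHadj
        have hene : a ≠ b := hGadj.ne
        have hmem : s(a, b) ∈ G.edgeSet \ H.edgeSet :=
          ⟨(G.mem_edgeSet).2 hGadj, fun h => hHadj ((H.mem_edgeSet).1 h)⟩
        have hH'G : H ⊔ SimpleGraph.fromEdgeSet {s(a, b)} ≤ G := by
          apply sup_le hHG
          intro x y hxy
          rw [SimpleGraph.fromEdgeSet_adj] at hxy
          obtain ⟨h1, -⟩ := hxy
          simp only [Set.mem_singleton_iff] at h1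
          rcases sym2_match h1 with ⟨hx, hy⟩ | ⟨hx, hy⟩
          · rw [hx, hy]; exact hGadj
          · rw [hx, hy]; exact hGadj.symm
        have hforced' : ∀ e, ForcedEdge G s t e →
            e ∈ (H ⊔ SimpleGraph.fromEdgeSet {s(a, b)}).edgeSet := by
          intro e he
          rw [SimpleGraph.edgeSet_sup]
          exact Or.inl (hforced e he)
        have hL' : LHS G s t (H ⊔ SimpleGraph.fromEdgeSet {s(a, b)}) := lhs_mono hL le_sup_left
        have hcard : (G.edgeSet \ (H ⊔ SimpleGraph.fromEdgeSet {s(a, b)}).edgeSet).ncard < n := by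
          have hss : G.edgeSet \ (H ⊔ SimpleGraph.fromEdgeSet {s(a, b)}).edgeSet ⊆
              (G.edgeSet \ H.edgeSet) \ {s(a, b)} := by
            intro e he
            refine ⟨⟨he.1, fun h => he.2 ?_⟩, fun h => he.2 ?_⟩
            · rw [SimpleGraph.edgeSet_sup]; exact Or.inl h
            · rw [SimpleGraph.edgeSet_sup]
              right
              rw [SimpleGraph.edgeSet_fromEdgeSet]
              simp only [Set.mem_singleton_iff] at h
              subst h
              refine ⟨rfl, ?_⟩
              simp only [Sym2.mem_diagSet, Sym2.isDiag_iff_proj_eq]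
              exact hene
          calc (G.edgeSet \ (H ⊔ SimpleGraph.fromEdgeSet {s(a, b)}).edgeSet).ncard
              ≤ ((G.edgeSet \ H.edgeSet) \ {s(a, b)}).ncard :=
                Set.ncard_le_ncard hss (finSym _)
            _ < (G.edgeSet \ H.edgeSet).ncard :=
                Set.ncard_diff_singleton_lt_of_mem hmem (finSym _)
            _ = n := hn
        have hreach' := ih _ hcard (H ⊔ SimpleGraph.fromEdgeSet {s(a, b)}) rfl hH'G hforced'
          hL' u v hgp F₀
          (fun e he => by rw [SimpleGraph.edgeSet_sup]; exact Or.inl (hF₀H he)) hF₀c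
        rcases reach_insert_split (p := a) (q := b) hreach' hnr with ⟨h1, h2⟩ | ⟨h1, h2⟩
        · exact Or.inl ⟨h1, h2.symm⟩
        · exact Or.inr ⟨h1, h2.symm⟩
      have hdisj : ∀ x, x ∈ comp (H.deleteEdges F₀) u → x ∉ comp (H.deleteEdges F₀) v := by
        intro x hxu hxv
        exact hnr (hxu.trans hxv.symm)
      have trap : ∀ y₁ y₂ : V, Terminal G s t y₂ → R3 G y₁ y₂ →
          s ∉ comp (H.deleteEdges F₀) y₁ → t ∉ comp (H.deleteEdges F₀) y₁ →
          y₂ ∉ comp (H.deleteEdges F₀) y₁ → Terminal G s t y₁ →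
          (∀ a b : V, G.Adj a b → ¬ H.Adj a b →
            (a ∈ comp (H.deleteEdges F₀) y₁ ∧ b ∈ comp (H.deleteEdges F₀) y₂) ∨
            (b ∈ comp (H.deleteEdges F₀) y₁ ∧ a ∈ comp (H.deleteEdges F₀) y₂)) → False := by
        intro y₁ y₂ hT₂ hR3' hs' ht' hy₂' hT₁ hmiss'
        have hy₁s : y₁ ≠ s := fun h => hs' (by rw [← h]; exact mem_comp_self _ y₁)
        have hy₁t : y₁ ≠ t := fun h => ht' (by rw [← h]; exact mem_comp_self _ y₁)
        obtain ⟨e₁, hf₁, hm₁⟩ : ∃ e, ForcedEdge G s t e ∧ y₁ ∈ e := by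
          rcases hT₁ with h | h | h
          · exact absurd h hy₁s
          · exact absurd h hy₁t
          · exact h
        have hrep₁ : e₁ = s(y₁, Sym2.Mem.other hm₁) := (Sym2.other_spec hm₁).symm
        have hadj₁ : G.Adj y₁ (Sym2.Mem.other hm₁) :=
          (G.mem_edgeSet).1 (by rw [← hrep₁]; exact forced_mem_edgeSet hf₁)
        obtain ⟨A₁, hc1, hc2, hc3, hc4⟩ := hf₁
        rw [hrep₁] at hc4
        by_cases hy₁A₁ : y₁ ∈ A₁
        · exact trapped_core h2 hHG hforced hL hF₀H hF₀c hR3' hT₂ hs' ht' hy₂' hmiss'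
            ⟨hc1, hc2, hc3⟩ hy₁A₁ hadj₁ hc4
        · refine trapped_core (s := t) (t := s) h2 hHG
            (fun e he => hforced e (forced_symm.2 he)) (lhs_symm hL) hF₀H hF₀c hR3'
            (terminal_symm hT₂) ht' hs' hy₂' hmiss' (A₁ := A₁ᶜ)
            (cut_compl ⟨hc1, hc2, hc3⟩) (by simpa using hy₁A₁) hadj₁ ?_
          rw [delta_compl]; exact hc4
      have hsd : ¬ (s ∈ comp (H.deleteEdges F₀) u ∧ s ∈ comp (H.deleteEdges F₀) v) :=
        fun ⟨h1', h2'⟩ => hdisj s h1' h2'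
      have htd : ¬ (t ∈ comp (H.deleteEdges F₀) u ∧ t ∈ comp (H.deleteEdges F₀) v) :=
        fun ⟨h1', h2'⟩ => hdisj t h1' h2'
      have hcase : (s ∈ comp (H.deleteEdges F₀) u ∧ t ∈ comp (H.deleteEdges F₀) v) ∨
          (t ∈ comp (H.deleteEdges F₀) u ∧ s ∈ comp (H.deleteEdges F₀) v) ∨
          (s ∉ comp (H.deleteEdges F₀) u ∧ t ∉ comp (H.deleteEdges F₀) u) ∨
          (s ∉ comp (H.deleteEdges F₀) v ∧ t ∉ comp (H.deleteEdges F₀) v) := by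
        tauto
      rcases hcase with ⟨hs1, ht1⟩ | ⟨ht1, hs1⟩ | ⟨hs1, ht1⟩ | ⟨hs1, ht1⟩
      · have hnst : ¬ (H.deleteEdges F₀).Reachable s t :=
          fun h => hdisj t (hs1.trans h) ht1.symm.symm
        have hcut : ∃ A', Cut G s t A' ∧ delta G A' ⊆ F₀ := by
          by_contra hno
          push_neg at hno
          exact hnst (hL F₀ (fun e he => SimpleGraph.edgeSet_mono hHG (hF₀H he)) hF₀c
            (noncut_reachable h2 hF₀c (fun A hA => hno A hA)))
        obtain ⟨A', hA', hsub'⟩ := hcut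
        have hclosedA' : ∀ x y : V, (H.deleteEdges F₀).Adj x y → x ∈ A' → y ∉ A' → False := by
          intro x y hK hx hy
          have hd := (SimpleGraph.deleteEdges_adj).1 hK
          exact hd.2 (hsub' ((adj_mem_delta (hHG hd.1)).2 (Or.inl ⟨hx, hy⟩)))
        have huA' : u ∈ A' := comp_subset_closed hclosedA' hA'.1 hs1.symm
        have hvA' : v ∉ A' := by
          have hsub2 : comp (H.deleteEdges F₀) t ⊆ A'ᶜ := comp_subset_closed (X := A'ᶜ)
            (fun x y hK hx hy => hclosedA' y x hK.symm (by simpa using hy) (by simpa using hx))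
            (by simpa using hA'.2.1)
          exact fun h => (hsub2 ht1.symm) h
        exact no_sep_of_r3 hR3 huA' hvA' hA'.2.2
      · have hnst : ¬ (H.deleteEdges F₀).Reachable s t :=
          fun h => hdisj t ht1 (hs1.trans h)
        have hcut : ∃ A', Cut G s t A' ∧ delta G A' ⊆ F₀ := by
          by_contra hno
          push_neg at hno
          exact hnst (hL F₀ (fun e he => SimpleGraph.edgeSet_mono hHG (hF₀H he)) hF₀c
            (noncut_reachable h2 hF₀c (fun A hA => hno A hA)))
        obtain ⟨A', hA', hsub'⟩ := hcut
        have hclosedA' : ∀ x y : V, (H.deleteEdges F₀).Adj x y → x ∈ A' → y ∉ A' → False := by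
          intro x y hK hx hy
          have hd := (SimpleGraph.deleteEdges_adj).1 hK
          exact hd.2 (hsub' ((adj_mem_delta (hHG hd.1)).2 (Or.inl ⟨hx, hy⟩)))
        have hvA' : v ∈ A' := comp_subset_closed hclosedA' hA'.1 hs1.symm
        have huA' : u ∉ A' := by
          have hsub2 : comp (H.deleteEdges F₀) t ⊆ A'ᶜ := comp_subset_closed (X := A'ᶜ)
            (fun x y hK hx hy => hclosedA' y x hK.symm (by simpa using hy) (by simpa using hx))
            (by simpa using hA'.2.1)
          exact fun h => (hsub2 ht1.symm) h
        exact no_sep_of_r3 (r3_symm hR3) hvA' huA' hA'.2.2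
      · exact trap u v hgp.2.1 hR3 hs1 ht1 (fun h => hnr h) hgp.1 hmiss
      · refine trap v u hgp.1 (r3_symm hR3) hs1 ht1 (fun h => hnr h.symm) hgp.2.1 ?_
        intro a b hGadj hHadj
        rcases hmiss a b hGadj hHadj with ⟨h1, h2⟩ | ⟨h1, h2⟩
        · exact Or.inr ⟨h2, h1⟩
        · exact Or.inl ⟨h2, h1⟩

end RSND

open RSND in
theorem stmt_0 {V : Type*} [Fintype V] (G : SimpleGraph V) (s t : V)
    (hst : s ≠ t) (h2ec : TwoEdgeConnected G) :
    ∃ D : Finset (Sym2 V),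
      -- (i) every pair in D is an ordinary 3-demand
      (∀ u v : V, s(u, v) ∈ D →
        ∀ F : Set (Sym2 V), F ⊆ G.edgeSet → F.ncard ≤ 2 →
          (G.deleteEdges F).Reachable u v) ∧
      -- (ii) for every spanning subgraph H of G containing all forced edges,
      -- H satisfies the relative demand (s,t,3) iff H satisfies all demands in D
      (∀ H : SimpleGraph V, H ≤ G →
        (∀ e : Sym2 V, ForcedEdge G s t e → e ∈ H.edgeSet) →
        ((∀ F : Set (Sym2 V), F ⊆ G.edgeSet → F.ncard ≤ 2 →
            (G.deleteEdges F).Reachable s t → (H.deleteEdges F).Reachable s t)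
          ↔
         (∀ u v : V, s(u, v) ∈ D →
            ∀ F : Set (Sym2 V), F ⊆ H.edgeSet → F.ncard ≤ 2 →
              (H.deleteEdges F).Reachable u v))) := by
  classical
  refine ⟨(finSym {e : Sym2 V | ∃ u v : V, e = s(u, v) ∧ GoodPair G s t u v}).toFinset, ?_, ?_⟩
  · intro u v huv F hF hc
    rw [Set.Finite.mem_toFinset] at huv
    obtain ⟨u', v', heq, hgp⟩ := huv
    have hr : R3 G u' v' := goodPair_r3 h2ec hgp.1 hgp.2.1 hgp.2.2
    rcases sym2_match heq with ⟨h1, h2⟩ | ⟨h1, h2⟩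
    · subst h1; subst h2; exact hr F hF hc
    · subst h1; subst h2; exact (r3_symm hr) F hF hc
  · intro H hHG hforced
    constructor
    · intro hLHS u v huv F hFH hFc
      rw [Set.Finite.mem_toFinset] at huv
      obtain ⟨u', v', heq, hgp⟩ := huv
      have hre := forward_aux h2ec _ H rfl hHG hforced hLHS u' v' hgp F hFH hFc
      rcases sym2_match heq with ⟨h1, h2⟩ | ⟨h1, h2⟩
      · subst h1; subst h2; exact hre
      · subst h1; subst h2; exact hre.symm
    · intro hRHS
      exact backward h2ec hHG hforced (fun u v hgp F hFH hFc =>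
        hRHS u v (by rw [Set.Finite.mem_toFinset]; exact ⟨u, v, rfl, hgp⟩) F hFH hFc)
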